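/- arXiv:1112.6059 — 8 statements merged into one kernel-verified Lean document; each statement's English description precedes it below -/
import Mathlib

section
/- For integers 0 ≤ k ≤ N and 0 ≤ n ≤ N, the k-th order correlation of simple random sampling satisfies the exact formula Corr(k) = Σ_{j=0}^{k} C(k,j) · ((n)_j/(N)_j) · (−n/N)^{k−j}, where (x)_j = x(x−1)⋯(x−j+1) denotes the falling factorial with (x)_0 = 1. -/
open Finset

lemma key_nat (N n j : ℕ) (hj : j ≤ n) (hn : n ≤ N) :
    N.choose n * n.descFactorial j = (N - j).choose (n - j) * N.descFactorial j := by
  have h1 : (n - j).factorial * n.descFactorial j = n.factorial :=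
    Nat.factorial_mul_descFactorial hj
  have h2 : (N - j).factorial * N.descFactorial j = N.factorial :=
    Nat.factorial_mul_descFactorial (hj.trans hn)
  have h3 := Nat.choose_mul_factorial_mul_factorial hn
  have h4 := Nat.choose_mul_factorial_mul_factorial (Nat.sub_le_sub_right hn j)
  rw [show N - j - (n - j) = N - n by omega] at h4
  have hpos : 0 < (n - j).factorial * (N - n).factorial :=
    Nat.mul_pos (Nat.factorial_pos _) (Nat.factorial_pos _)
  apply Nat.eq_of_mul_eq_mul_right hpos
  calc N.choose n * n.descFactorial j * ((n - j).factorial * (N - n).factorial)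
      = N.choose n * ((n - j).factorial * n.descFactorial j) * (N - n).factorial := by ring
    _ = N.choose n * n.factorial * (N - n).factorial := by rw [h1]
    _ = N.factorial := h3
    _ = (N - j).factorial * N.descFactorial j := h2.symm
    _ = ((N - j).choose (n - j) * (n - j).factorial * (N - n).factorial) * N.descFactorial j := by
        rw [h4]
    _ = (N - j).choose (n - j) * N.descFactorial j * ((n - j).factorial * (N - n).factorial) := by
        ring

lemma count_lemma (s t : Finset ℕ) (n : ℕ) (hts : t ⊆ s) (htn : t.card ≤ n) :
    ((s.powersetCard n).filter (fun r => t ⊆ r)).card = (s.card - t.card).choose (n - t.card) := by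
  rw [show s.card - t.card = (s \ t).card from (Finset.card_sdiff_of_subset hts).symm,
    ← Finset.card_powersetCard (n - t.card) (s \ t)]
  apply Finset.card_nbij' (fun r => r \ t) (fun u => u ∪ t)
  · intro r hr
    simp only [mem_coe, mem_filter, mem_powersetCard] at hr
    obtain ⟨⟨hrs, hrc⟩, htr⟩ := hr
    simp only [mem_coe, mem_powersetCard]
    exact ⟨sdiff_subset_sdiff hrs Subset.rfl, by rw [card_sdiff_of_subset htr, hrc]⟩
  · intro u hu
    simp only [mem_coe, mem_powersetCard] at hu
    obtain ⟨hus, huc⟩ := hu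
    have hdisj : Disjoint u t := Finset.sdiff_disjoint.mono_left hus
    simp only [mem_coe, mem_filter, mem_powersetCard]
    refine ⟨⟨union_subset (hus.trans sdiff_subset) hts, ?_⟩, subset_union_right⟩
    rw [card_union_of_disjoint hdisj, huc]
    omega
  · intro r hr
    simp only [mem_coe, mem_filter] at hr
    exact sdiff_union_of_subset hr.2
  · intro u hu
    simp only [mem_coe, mem_powersetCard] at hu
    exact union_sdiff_cancel_right (Finset.sdiff_disjoint.mono_left hu.1)

/-- For integers `0 ≤ k ≤ N` and `0 ≤ n ≤ N`, the `k`-th order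
correlation of simple random sampling of size `n` from the population `{1,…,N}` (here
modelled as `Finset.range N`) satisfies the exact formula
`Corr(k) = Σ_{j=0}^{k} C(k,j) · ((n)_j/(N)_j) · (−n/N)^{k−j}`,
where `(x)_j = x(x−1)⋯(x−j+1)` is the falling factorial (`Nat.descFactorial`). -/
theorem corr_formula (N n k : ℕ) (hk : k ≤ N) (hn : n ≤ N)
    (H : Finset ℕ) (hH : H ⊆ Finset.range N) (hcard : H.card = k) :
    (Nat.choose N n : ℝ)⁻¹ *
        ∑ r ∈ (Finset.range N).powersetCard n,
          ∏ A ∈ H, ((if A ∈ r then (1 : ℝ) else 0) - (n : ℝ) / N) =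
      ∑ j ∈ Finset.range (k + 1),
        (Nat.choose k j : ℝ) *
          ((Nat.descFactorial n j : ℝ) / (Nat.descFactorial N j : ℝ)) *
          (-(n : ℝ) / N) ^ (k - j) := by
  have expand : ∀ r : Finset ℕ,
      ∏ A ∈ H, ((if A ∈ r then (1 : ℝ) else 0) - (n : ℝ) / N) =
        ∑ t ∈ H.powerset, (if t ⊆ r then (1:ℝ) else 0) * (-(n:ℝ)/N) ^ (k - t.card) := by
    intro r
    have := Finset.prod_add (fun A => if A ∈ r then (1 : ℝ) else 0) (fun _ => -(n:ℝ)/N) H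
    simp only [sub_eq_add_neg, neg_div] at this ⊢
    rw [this]
    refine Finset.sum_congr rfl fun t ht => ?_
    rw [Finset.prod_boole, Finset.prod_const, card_sdiff_of_subset (mem_powerset.1 ht), hcard]
    rfl
  calc (Nat.choose N n : ℝ)⁻¹ *
        ∑ r ∈ (Finset.range N).powersetCard n,
          ∏ A ∈ H, ((if A ∈ r then (1 : ℝ) else 0) - (n : ℝ) / N)
      = (Nat.choose N n : ℝ)⁻¹ * ∑ t ∈ H.powerset,
          (((((Finset.range N).powersetCard n).filter (fun r => t ⊆ r)).card : ℝ)
            * (-(n:ℝ)/N) ^ (k - t.card)) := by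
        rw [Finset.sum_congr rfl (fun r _ => expand r), Finset.sum_comm]
        congr 1
        · refine Finset.sum_congr rfl fun t _ => ?_
          rw [← Finset.sum_mul, Finset.sum_boole]
    _ = ∑ j ∈ Finset.range (k + 1),
        (Nat.choose k j : ℝ) *
          ((Nat.descFactorial n j : ℝ) / (Nat.descFactorial N j : ℝ)) *
          (-(n : ℝ) / N) ^ (k - j) := by
        rw [Finset.mul_sum, Finset.sum_powerset, hcard]
        refine Finset.sum_congr rfl fun j hj => ?_
        rw [mem_range, Nat.lt_succ_iff] at hj
        have hjN : j ≤ N := hj.trans hk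
        by_cases hjn : j ≤ n
        · have hcount : ∀ t ∈ H.powersetCard j,
              ((((Finset.range N).powersetCard n).filter (fun r => t ⊆ r)).card : ℝ)
                = ((N - j).choose (n - j) : ℝ) := by
            intro t ht
            rw [mem_powersetCard] at ht
            rw [count_lemma _ _ _ (ht.1.trans hH) (ht.2 ▸ hjn)]
            rw [Finset.card_range, ht.2]
          rw [Finset.sum_congr rfl fun t ht => by
            rw [hcount t ht, (mem_powersetCard.1 ht).2]]
          rw [Finset.sum_const, Finset.card_powersetCard, hcard, nsmul_eq_mul]
          have hchoose : (N.choose n : ℝ) ≠ 0 := by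
            exact_mod_cast (Nat.choose_pos hn).ne'
          have hdesc : (N.descFactorial j : ℝ) ≠ 0 := by
            have : N.descFactorial j ≠ 0 := by
              rw [Ne, Nat.descFactorial_eq_zero_iff_lt]; omega
            exact_mod_cast this
          have hkey : (N.choose n : ℝ) * (n.descFactorial j : ℝ)
              = ((N - j).choose (n - j) : ℝ) * (N.descFactorial j : ℝ) := by
            exact_mod_cast congrArg (Nat.cast : ℕ → ℝ) (key_nat N n j hjn hn)
          have : ((N.choose n : ℝ))⁻¹ * ((N - j).choose (n - j) : ℝ)
              = (n.descFactorial j : ℝ) / (N.descFactorial j : ℝ) := by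
            field_simp
            linarith [hkey]
          linear_combination ((k.choose j : ℝ) * (-(n : ℝ) / N) ^ (k - j)) * this
        · push_neg at hjn
          have hcount : ∀ t ∈ H.powersetCard j,
              ((((Finset.range N).powersetCard n).filter (fun r => t ⊆ r)).card : ℝ) = 0 := by
            intro t ht
            rw [mem_powersetCard] at ht
            norm_cast
            rw [Finset.card_eq_zero, Finset.filter_eq_empty_iff]
            intro r hr
            rw [mem_powersetCard] at hr
            intro htr
            have := Finset.card_le_card htr
            omega
          rw [Finset.sum_congr rfl fun t ht => by rw [hcount t ht, zero_mul]]
          rw [Nat.descFactorial_of_lt hjn]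
          simp
end

section
/- Let k be an even positive integer. If f_N → f for some f ∈ (0,1) as N → ∞, then lim_{N→∞} N^{k/2} · Corr_N(k) = (f(f−1))^{k/2} · k!/(2^{k/2} (k/2)!), i.e. the limit equals (f(f−1))^{k/2} · E Z^k. -/
open Filter

section CorrAux

/-- Sum over all samples of size `ν` from `range N` of the product of centered
indicators over an index set `s`. -/
noncomputable def sampSum (N ν : ℕ) (s : Finset ℕ) : ℝ :=
  ∑ r ∈ (Finset.range N).powersetCard ν,
    ∏ A ∈ s, ((if A ∈ r then (1 : ℝ) else 0) - (ν : ℝ) / N)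

lemma sampSum_perm (N ν : ℕ) (σ : Equiv.Perm ℕ) (hσ : ∀ i < N, σ i < N) (s : Finset ℕ) :
    sampSum N ν (s.image σ) = sampSum N ν s := by
  have hmem : ∀ (τ : Equiv.Perm ℕ), (∀ i < N, τ i < N) →
      ∀ r ∈ (Finset.range N).powersetCard ν, r.image τ ∈ (Finset.range N).powersetCard ν := by
    intro τ hτ r hr
    rw [Finset.mem_powersetCard] at hr ⊢
    refine ⟨fun x hx => ?_, ?_⟩
    · rcases Finset.mem_image.1 hx with ⟨y, hy, rfl⟩
      exact Finset.mem_range.2 (hτ y (Finset.mem_range.1 (hr.1 hy)))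
    · rw [Finset.card_image_of_injective _ τ.injective, hr.2]
  have hσ' : ∀ i < N, σ.symm i < N := by
    have himg : (Finset.range N).image σ = Finset.range N := by
      apply Finset.eq_of_subset_of_card_le
      · intro x hx
        rcases Finset.mem_image.1 hx with ⟨y, hy, rfl⟩
        exact Finset.mem_range.2 (hσ y (Finset.mem_range.1 hy))
      · rw [Finset.card_image_of_injective _ σ.injective]
    intro i hi
    have : i ∈ (Finset.range N).image σ := himg.symm ▸ Finset.mem_range.2 hi
    rcases Finset.mem_image.1 this with ⟨y, hy, rfl⟩
    rw [Equiv.symm_apply_apply]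
    exact Finset.mem_range.1 hy
  unfold sampSum
  refine Finset.sum_nbij' (fun r => r.image σ.symm) (fun r => r.image σ)
    (hmem σ.symm hσ') (hmem σ hσ) ?_ ?_ ?_
  · intro r _
    simp [Finset.image_image]
  · intro r _
    simp [Finset.image_image]
  · intro r _
    rw [Finset.prod_image (fun x _ y _ h => σ.injective h)]
    refine Finset.prod_congr rfl fun A _ => ?_
    have : A ∈ r.image σ.symm ↔ σ A ∈ r := by
      constructor
      · intro h
        rcases Finset.mem_image.1 h with ⟨y, hy, hyx⟩
        rwa [← hyx, Equiv.apply_symm_apply]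
      · intro h
        exact Finset.mem_image.2 ⟨σ A, h, Equiv.symm_apply_apply _ _⟩
    simp only [this]

lemma swap_range {a b N : ℕ} (ha : a < N) (hb : b < N) : ∀ i < N, Equiv.swap a b i < N := by
  intro i hi
  rw [Equiv.swap_apply_def]
  split_ifs <;> assumption

lemma sampSum_insert (N ν k A : ℕ) (hA : k ≤ A) (hAN : A < N) :
    sampSum N ν (insert A (Finset.range k)) = sampSum N ν (Finset.range (k + 1)) := by
  have hkN : k < N := lt_of_le_of_lt hA hAN
  have himg : (insert A (Finset.range k)).image (Equiv.swap A k) = Finset.range (k + 1) := by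
    rw [Finset.image_insert, Equiv.swap_apply_left]
    have : (Finset.range k).image (Equiv.swap A k) = Finset.range k := by
      rw [show (Finset.range k).image (Equiv.swap A k) = (Finset.range k).image id from
        Finset.image_congr ?_, Finset.image_id]
      intro x hx
      simp only [Finset.coe_range, Set.mem_Iio] at hx
      simp only [id]
      rw [Equiv.swap_apply_def]
      split_ifs with h1 h2 <;> omega
    rw [this, Finset.range_add_one]
  rw [← himg, sampSum_perm N ν _ (swap_range hAN hkN)]

lemma sampSum_erase (N ν k A : ℕ) (hA : A < k + 1) (hk : k < N) :
    sampSum N ν ((Finset.range (k + 1)).erase A) = sampSum N ν (Finset.range k) := by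
  have hAN : A < N := lt_of_lt_of_le hA hk
  have himg : ((Finset.range (k + 1)).erase A).image (Equiv.swap A k) = Finset.range k := by
    ext x
    simp only [Finset.mem_image, Finset.mem_erase, Finset.mem_range]
    constructor
    · rintro ⟨y, ⟨hy1, hy2⟩, rfl⟩
      rw [Equiv.swap_apply_def]
      split_ifs <;> omega
    · intro hx
      refine ⟨Equiv.swap A k x, ⟨?_, ?_⟩, Equiv.swap_apply_self _ _ _⟩
      · rw [Equiv.swap_apply_def]; split_ifs <;> omega
      · rw [Equiv.swap_apply_def]; split_ifs <;> omega
  rw [← himg, sampSum_perm N ν _ (swap_range hAN hk)]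

/-- T N ν k : the sum over samples for the first k individuals. -/
noncomputable def TS (N ν k : ℕ) : ℝ := sampSum N ν (Finset.range k)

lemma TS_rec (N ν k : ℕ) (hk : k < N) :
    ((N : ℝ) - k) * TS N ν (k + 1)
      = -(k : ℝ) * ((1 - 2 * ((ν : ℝ) / N)) * TS N ν k
          + ((ν : ℝ) / N) * (1 - (ν : ℝ) / N) * TS N ν (k - 1)) := by
  have hN0 : (0 : ℝ) < N := by exact_mod_cast lt_of_le_of_lt (Nat.zero_le k) hk
  set c : ℝ := (ν : ℝ) / N with hc
  set P := (Finset.range N).powersetCard ν with hP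
  have key : ∀ r ∈ P, ∑ A ∈ Finset.range N, ((if A ∈ r then (1 : ℝ) else 0) - c) = 0 := by
    intro r hr
    rw [Finset.mem_powersetCard] at hr
    rw [Finset.sum_sub_distrib, Finset.sum_const, Finset.card_range, nsmul_eq_mul,
      Finset.sum_ite_mem, Finset.inter_eq_right.2 hr.1, Finset.sum_const, hr.2, nsmul_eq_mul,
      mul_one, hc]
    field_simp
    ring
  have h0 : ∑ A ∈ Finset.range N,
      (∑ r ∈ P, ((if A ∈ r then (1 : ℝ) else 0) - c)
        * ∏ B ∈ Finset.range k, ((if B ∈ r then (1 : ℝ) else 0) - c)) = 0 := by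
    rw [Finset.sum_comm]
    apply Finset.sum_eq_zero
    intro r hr
    rw [← Finset.sum_mul, key r hr, zero_mul]
  have hhi : ∀ A ∈ Finset.Ico k N,
      (∑ r ∈ P, ((if A ∈ r then (1 : ℝ) else 0) - c)
        * ∏ B ∈ Finset.range k, ((if B ∈ r then (1 : ℝ) else 0) - c)) = TS N ν (k + 1) := by
    intro A hA
    obtain ⟨hA1, hA2⟩ := Finset.mem_Ico.1 hA
    have hAnot : A ∉ Finset.range k := by simp; omega
    have : ∀ r : Finset ℕ, ((if A ∈ r then (1 : ℝ) else 0) - c)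
        * ∏ B ∈ Finset.range k, ((if B ∈ r then (1 : ℝ) else 0) - c)
        = ∏ B ∈ insert A (Finset.range k), ((if B ∈ r then (1 : ℝ) else 0) - c) := by
      intro r
      rw [Finset.prod_insert hAnot]
    simp_rw [this]
    exact sampSum_insert N ν k A hA1 hA2
  have hlo : ∀ A ∈ Finset.range k,
      (∑ r ∈ P, ((if A ∈ r then (1 : ℝ) else 0) - c)
        * ∏ B ∈ Finset.range k, ((if B ∈ r then (1 : ℝ) else 0) - c))
      = (1 - 2 * c) * TS N ν k + c * (1 - c) * TS N ν (k - 1) := by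
    intro A hA
    have hAk : A < k := Finset.mem_range.1 hA
    have : ∀ r : Finset ℕ, ((if A ∈ r then (1 : ℝ) else 0) - c)
        * ∏ B ∈ Finset.range k, ((if B ∈ r then (1 : ℝ) else 0) - c)
        = (1 - 2 * c) * ∏ B ∈ Finset.range k, ((if B ∈ r then (1 : ℝ) else 0) - c)
          + c * (1 - c) * ∏ B ∈ (Finset.range k).erase A, ((if B ∈ r then (1 : ℝ) else 0) - c) := by
      intro r
      rw [← Finset.mul_prod_erase (Finset.range k)
        (fun B => ((if B ∈ r then (1 : ℝ) else 0) - c)) hA]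
      by_cases h : A ∈ r <;> simp [h] <;> ring
    simp_rw [this]
    rw [Finset.sum_add_distrib, ← Finset.mul_sum, ← Finset.mul_sum]
    congr 1
    have hk1 : 1 ≤ k := by omega
    have herase : (Finset.range k).erase A = (Finset.range ((k - 1) + 1)).erase A := by
      rw [Nat.sub_add_cancel hk1]
    rw [show (∑ r ∈ P, ∏ B ∈ (Finset.range k).erase A,
        ((if B ∈ r then (1 : ℝ) else 0) - c)) = sampSum N ν ((Finset.range k).erase A) from rfl,
      herase, sampSum_erase N ν (k - 1) A (by omega) (by omega)]
    rfl
  rw [← Finset.sum_range_add_sum_Ico _ (le_of_lt hk)] at h0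
  rw [Finset.sum_congr rfl hlo, Finset.sum_congr rfl hhi, Finset.sum_const, Finset.sum_const,
    Finset.card_range, Nat.card_Ico, nsmul_eq_mul, nsmul_eq_mul, Nat.cast_sub (le_of_lt hk)]
    at h0
  linarith


noncomputable def Corr (N ν k : ℕ) : ℝ := (Nat.choose N ν : ℝ)⁻¹ * TS N ν k

lemma Corr_zero (N ν : ℕ) (h : ν ≤ N) : Corr N ν 0 = 1 := by
  have hch : ((Nat.choose N ν : ℝ)) ≠ 0 := Nat.cast_ne_zero.2 (Nat.choose_pos h).ne'
  unfold Corr TS sampSum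
  simp only [Finset.prod_range_zero]
  rw [Finset.sum_const, Finset.card_powersetCard, Finset.card_range, nsmul_eq_mul, mul_one,
    inv_mul_cancel₀ hch]

lemma Corr_one (N ν : ℕ) (hN : 0 < N) : Corr N ν 1 = 0 := by
  have h := TS_rec N ν 0 hN
  have hN' : (N : ℝ) ≠ 0 := by positivity
  simp only [Nat.cast_zero, sub_zero, neg_zero, zero_mul] at h
  have : TS N ν 1 = 0 := by
    rcases mul_eq_zero.1 h with h' | h'
    · exact absurd h' hN'
    · exact h'
  unfold Corr
  rw [this, mul_zero]

lemma Corr_rec (N ν k : ℕ) (hk : k < N) :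
    Corr N ν (k + 1)
      = (-(k : ℝ) / ((N : ℝ) - k)) * ((1 - 2 * ((ν : ℝ) / N)) * Corr N ν k
          + ((ν : ℝ) / N) * (1 - (ν : ℝ) / N) * Corr N ν (k - 1)) := by
  have hNk : (N : ℝ) - k ≠ 0 := by
    have : (k : ℝ) < N := by exact_mod_cast hk
    linarith
  have h := TS_rec N ν k hk
  have hT : TS N ν (k + 1)
      = (-(k : ℝ) / ((N : ℝ) - k)) * ((1 - 2 * ((ν : ℝ) / N)) * TS N ν k
          + ((ν : ℝ) / N) * (1 - (ν : ℝ) / N) * TS N ν (k - 1)) := by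
    rw [div_mul_eq_mul_div, eq_div_iff hNk]
    linarith
  unfold Corr
  rw [hT]
  ring

noncomputable def limA (f : ℝ) : ℕ → ℝ
  | 0 => 1
  | 1 => 0
  | (k + 2) =>
      if Even k then ((k : ℝ) + 1) * (f * (f - 1)) * limA f k
      else -((k : ℝ) + 1) * ((1 - 2 * f) * limA f (k + 1) + f * (1 - f) * limA f k)

lemma corr_tendsto (n : ℕ → ℕ) (hn : ∀ N, n N ≤ N) (f : ℝ)
    (hconv : Tendsto (fun N : ℕ => (n N : ℝ) / N) atTop (nhds f)) (k : ℕ) :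
    Tendsto (fun N : ℕ => (N : ℝ) ^ ((k + 1) / 2) * Corr N (n N) k) atTop
      (nhds (limA f k)) := by
  induction k using Nat.twoStepInduction with
  | zero =>
    have h : (fun N : ℕ => (N : ℝ) ^ ((0 + 1) / 2) * Corr N (n N) 0) = fun _ => (1 : ℝ) := by
      funext N
      rw [Corr_zero N (n N) (hn N)]
      norm_num
    rw [h, show limA f 0 = 1 from rfl]
    exact tendsto_const_nhds
  | one =>
    have h : Tendsto (fun _ : ℕ => (0 : ℝ)) atTop (nhds (limA f 1)) := by
      rw [show limA f 1 = 0 from rfl]; exact tendsto_const_nhds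
    refine h.congr' ?_
    filter_upwards [eventually_ge_atTop 1] with N hN
    rw [Corr_one N (n N) hN, mul_zero]
  | more k ih ih1 =>
    set e := (k + 1) / 2 with he
    have hsub : Tendsto (fun N : ℕ => (N : ℝ) - ((k : ℝ) + 1)) atTop atTop := by
      have h := tendsto_atTop_add_const_right atTop (-((k : ℝ) + 1)) tendsto_natCast_atTop_atTop
      simpa [sub_eq_add_neg] using h
    have hq : Tendsto (fun N : ℕ => (N : ℝ) / ((N : ℝ) - ((k : ℝ) + 1))) atTop (nhds 1) := by
      have h0 : Tendsto (fun N : ℕ => 1 + ((k : ℝ) + 1) / ((N : ℝ) - ((k : ℝ) + 1))) atTop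
          (nhds (1 + 0)) := tendsto_const_nhds.add (Tendsto.div_atTop tendsto_const_nhds hsub)
      rw [add_zero] at h0
      refine h0.congr' ?_
      filter_upwards [eventually_ge_atTop (k + 2)] with N hN
      have hNk : (N : ℝ) - ((k : ℝ) + 1) ≠ 0 := by
        have : ((k : ℕ) + 2 : ℕ) ≤ N := hN
        have : ((k : ℝ) + 2) ≤ (N : ℝ) := by exact_mod_cast this
        linarith
      field_simp
      ring
    have hinv : Tendsto (fun N : ℕ => ((N : ℝ))⁻¹) atTop (nhds 0) :=
      tendsto_inv_atTop_zero.comp tendsto_natCast_atTop_atTop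
    have hA : Tendsto (fun N : ℕ => (N : ℝ) ^ e * Corr N (n N) (k + 1)) atTop
        (nhds (if Even k then 0 else limA f (k + 1))) := by
      rcases Nat.even_or_odd k with hke | hko
      · rw [if_pos hke]
        have hk2 : k % 2 = 0 := Nat.even_iff.1 hke
        have h2 : (k + 1 + 1) / 2 = e + 1 := by omega
        have h3 := ih1.mul hinv
        rw [mul_zero] at h3
        refine h3.congr' ?_
        filter_upwards [eventually_ge_atTop 1] with N hN
        have hN0 : (N : ℝ) ≠ 0 := Nat.cast_ne_zero.2 (by omega)
        calc (N : ℝ) ^ ((k + 1 + 1) / 2) * Corr N (n N) (k + 1) * (N : ℝ)⁻¹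
            = (N : ℝ) ^ e * Corr N (n N) (k + 1) * ((N : ℝ) * (N : ℝ)⁻¹) := by
              rw [h2, pow_succ]; ring
          _ = (N : ℝ) ^ e * Corr N (n N) (k + 1) := by
              rw [mul_inv_cancel₀ hN0, mul_one]
      · rw [if_neg (Nat.not_even_iff_odd.2 hko)]
        have hk2 : k % 2 = 1 := Nat.odd_iff.1 hko
        have h2 : (k + 1 + 1) / 2 = e := by omega
        rw [h2] at ih1
        exact ih1
    have hmain : Tendsto (fun N : ℕ =>
        (-((k : ℝ) + 1) * ((N : ℝ) / ((N : ℝ) - ((k : ℝ) + 1))))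
            * ((1 - 2 * ((n N : ℝ) / N)) * ((N : ℝ) ^ e * Corr N (n N) (k + 1))
              + ((n N : ℝ) / N) * (1 - (n N : ℝ) / N) * ((N : ℝ) ^ e * Corr N (n N) k)))
        atTop (nhds ((-((k : ℝ) + 1) * 1)
            * ((1 - 2 * f) * (if Even k then 0 else limA f (k + 1))
              + f * (1 - f) * limA f k))) :=
      (tendsto_const_nhds.mul hq).mul
        (((tendsto_const_nhds.sub (tendsto_const_nhds.mul hconv)).mul hA).add
          ((hconv.mul (tendsto_const_nhds.sub hconv)).mul ih))
    have hval : (-((k : ℝ) + 1) * 1)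
            * ((1 - 2 * f) * (if Even k then 0 else limA f (k + 1))
              + f * (1 - f) * limA f k) = limA f (k + 2) := by
      rcases Nat.even_or_odd k with hke | hko
      · rw [if_pos hke, show limA f (k + 2)
          = if Even k then ((k : ℝ) + 1) * (f * (f - 1)) * limA f k
            else -((k : ℝ) + 1) * ((1 - 2 * f) * limA f (k + 1) + f * (1 - f) * limA f k)
          from rfl, if_pos hke]
        ring
      · have hne : ¬ Even k := Nat.not_even_iff_odd.2 hko
        rw [if_neg hne, show limA f (k + 2)
          = if Even k then ((k : ℝ) + 1) * (f * (f - 1)) * limA f k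
            else -((k : ℝ) + 1) * ((1 - 2 * f) * limA f (k + 1) + f * (1 - f) * limA f k)
          from rfl, if_neg hne]
        ring
    rw [hval] at hmain
    refine hmain.congr' ?_
    filter_upwards [eventually_ge_atTop (k + 2)] with N hN
    have hrec := Corr_rec N (n N) (k + 1) (by omega)
    have hsimp : (k + 1 - 1) = k := by omega
    rw [hsimp] at hrec
    have h3 : (k + 2 + 1) / 2 = e + 1 := by omega
    rw [h3, hrec, pow_succ]
    push_cast
    ring

lemma limA_even (f : ℝ) (m : ℕ) : limA f (2 * m)
    = (f * (f - 1)) ^ m * ((Nat.factorial (2 * m) : ℝ) / (2 ^ m * (Nat.factorial m : ℝ))) := by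
  induction m with
  | zero => simp [limA, Nat.factorial]
  | succ m ih =>
    have h2 : 2 * (m + 1) = 2 * m + 2 := by ring
    rw [h2, show limA f (2 * m + 2)
        = if Even (2 * m) then (((2 * m : ℕ) : ℝ) + 1) * (f * (f - 1)) * limA f (2 * m)
          else -(((2 * m : ℕ) : ℝ) + 1) * ((1 - 2 * f) * limA f (2 * m + 1)
            + f * (1 - f) * limA f (2 * m)) from rfl,
      if_pos (even_two_mul m), ih]
    have hfac : Nat.factorial (2 * m + 2) = (2 * m + 2) * ((2 * m + 1) * Nat.factorial (2 * m)) := by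
      rw [show 2 * m + 2 = (2 * m + 1) + 1 from rfl, Nat.factorial_succ, Nat.factorial_succ]
    rw [hfac, Nat.factorial_succ]
    have hm : ((Nat.factorial m : ℝ)) ≠ 0 := Nat.cast_ne_zero.2 (Nat.factorial_ne_zero m)
    have h2m : ((2 : ℝ)) ^ m ≠ 0 := by positivity
    have hm1 : ((m : ℝ) + 1) ≠ 0 := by positivity
    push_cast
    field_simp
    ring

end CorrAux

/-- Let `k` be an even positive integer.  If the sampling fractions
`f_N = n_N/N` converge to some `f ∈ (0,1)` as `N → ∞`, then
`lim_{N→∞} N^{k/2} · Corr_N(k) = (f(f−1))^{k/2} · k!/(2^{k/2} (k/2)!)`,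
i.e. the limit equals `(f(f−1))^{k/2} · E Z^k` for a standard normal `Z`.  Here
`Corr_N(k) = C(N,n_N)⁻¹ · Σ_{r ⊆ {1,…,N}, |r|=n_N} ∏_{A=1}^{k} (1_{A∈r} − f_N)`,
with the population `{1,…,N}` modelled as `Finset.range N` and the first `k`
individuals as `Finset.range k`. -/
theorem corr_limit_even (n : ℕ → ℕ) (hn : ∀ N, n N ≤ N) (f : ℝ)
    (hf : f ∈ Set.Ioo (0 : ℝ) 1)
    (hconv : Tendsto (fun N : ℕ => (n N : ℝ) / N) atTop (nhds f))
    (k : ℕ) (hk : Even k) (hk0 : 0 < k) :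
    Tendsto
      (fun N : ℕ => (N : ℝ) ^ (k / 2) *
        ((Nat.choose N (n N) : ℝ)⁻¹ *
          ∑ r ∈ (Finset.range N).powersetCard (n N),
            ∏ A ∈ Finset.range k, ((if A ∈ r then (1 : ℝ) else 0) - (n N : ℝ) / N)))
      atTop
      (nhds ((f * (f - 1)) ^ (k / 2) *
        ((Nat.factorial k : ℝ) / (2 ^ (k / 2) * (Nat.factorial (k / 2) : ℝ))))) := by
  have hk2 : k % 2 = 0 := Nat.even_iff.1 hk
  obtain ⟨m, rfl⟩ : ∃ m, k = 2 * m := ⟨k / 2, by omega⟩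
  have hmain := corr_tendsto n hn f hconv (2 * m)
  rw [limA_even f m] at hmain
  have hexp : (2 * m + 1) / 2 = m := by omega
  have hexp2 : 2 * m / 2 = m := by omega
  rw [hexp] at hmain
  simp only [hexp2]
  exact hmain
end

section
/- For all nonnegative integers k, m and j with 0 ≤ k−m+1 ≤ j ≤ k, one has P_{k,m}(j) = 0. -/
/-- `P k m j` is the rational number `P_{k,m}(j)` defined by `P_{k,0}(j) = 1` and
`P_{k,m}(j) = Σ_{q=1}^{k−m} q·P_{k,m−1}(q+1) − Σ_{q=1}^{j−1} q·P_{k,m−1}(q+1)` for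
`m ≥ 1` (empty sums are `0`). -/
def P (k : ℕ) : ℕ → ℕ → ℚ
  | 0, _ => 1
  | m + 1, j =>
      (∑ q ∈ Finset.Icc 1 (k - (m + 1)), (q : ℚ) * P k m (q + 1)) -
      ∑ q ∈ Finset.Icc 1 (j - 1), (q : ℚ) * P k m (q + 1)

/-- For all nonnegative integers `k`, `m` and `j` with
`0 ≤ k−m+1 ≤ j ≤ k`, one has `P_{k,m}(j) = 0`. -/
theorem P_eq_zero (k m j : ℕ) (h0 : 0 ≤ (k : ℤ) - m + 1)
    (h1 : (k : ℤ) - m + 1 ≤ j) (h2 : j ≤ k) : P k m j = 0 := by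
  induction m generalizing j with
  | zero => omega
  | succ m ih =>
    have hkm : m ≤ k := by omega
    rw [P]
    have e1 : Finset.Icc 1 (k - (m + 1)) = Finset.Ioc 0 (k - (m + 1)) := by
      rw [← Finset.Icc_add_one_left_eq_Ioc, zero_add]
    have e2 : Finset.Icc 1 (j - 1) = Finset.Ioc 0 (j - 1) := by
      rw [← Finset.Icc_add_one_left_eq_Ioc, zero_add]
    rw [e1, e2]
    have hsplit : (∑ q ∈ Finset.Ioc 0 (k - (m + 1)), (q : ℚ) * P k m (q + 1)) +
        (∑ q ∈ Finset.Ioc (k - (m + 1)) (j - 1), (q : ℚ) * P k m (q + 1)) =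
        ∑ q ∈ Finset.Ioc 0 (j - 1), (q : ℚ) * P k m (q + 1) := by
      apply Finset.sum_Ioc_consecutive
      · exact Nat.zero_le _
      · omega
    rw [← hsplit]
    have hz : ∀ q ∈ Finset.Ioc (k - (m + 1)) (j - 1), (q : ℚ) * P k m (q + 1) = 0 := by
      intro q hq
      rw [Finset.mem_Ioc] at hq
      rw [ih (q + 1) (by omega) (by push_cast; omega) (by omega)]
      ring
    rw [Finset.sum_eq_zero hz]
    ring
end

section
/- For all integers k and m with 1 ≤ m ≤ k there exists a single-variable polynomial r (depending on k and m) with rational coefficients of degree at most max(2m−2,0), such that for every integer j with 0 ≤ j ≤ k: P_{k,m}(j) = (−1)^m ( j^{2m} + (1/3) m (2m−5) j^{2m−1} ) / (2^m m!) + r(j). -/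
open Polynomial Finset

noncomputable def Acoef (m : ℕ) : ℚ := (-1) ^ m / (2 ^ m * m.factorial)
noncomputable def Bcoef (m : ℕ) : ℚ := Acoef m * m * (2 * m - 5) / 3

lemma Acoef_succ (m : ℕ) : Acoef (m + 1) = -Acoef m / (2 * (m : ℚ) + 2) := by
  have h1 : ((m.factorial : ℚ)) ≠ 0 := Nat.cast_ne_zero.2 m.factorial_ne_zero
  have h2 : (2 : ℚ) ^ m ≠ 0 := by positivity
  have h3 : (m : ℚ) + 1 ≠ 0 := by positivity
  simp only [Acoef, pow_succ, Nat.factorial_succ]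
  push_cast
  field_simp

lemma Bcoef_succ (m : ℕ) :
    Bcoef (m + 1) = Acoef m / 2 - (Acoef m * (2 * (m : ℚ)) + Bcoef m) / (2 * (m : ℚ) + 1) := by
  have h1 : (2 * (m : ℚ) + 1) ≠ 0 := by positivity
  have h3 : (m : ℚ) + 1 ≠ 0 := by positivity
  simp only [Bcoef, Acoef_succ]
  push_cast
  field_simp
  ring

lemma sum_Icc_one (f : ℕ → ℚ) (hf : f 0 = 0) (j : ℕ) :
    ∑ q ∈ Finset.Icc 1 (j - 1), f q = ∑ q ∈ Finset.range j, f q := by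
  cases j with
  | zero => simp
  | succ n =>
    rw [Nat.add_sub_cancel, ← Finset.Ico_add_one_right_eq_Icc, Finset.sum_Ico_eq_sum_range,
      Finset.sum_range_succ']
    simp only [hf, add_zero, Nat.add_sub_cancel]
    exact Finset.sum_congr rfl fun i _ => by rw [add_comm]

lemma gauss (j : ℕ) : ∑ q ∈ Finset.range j, (q : ℚ) = ((j : ℚ) ^ 2 - j) / 2 := by
  induction j with
  | zero => simp
  | succ n ih => rw [Finset.sum_range_succ, ih]; push_cast; ring

lemma sum_pow_split (p : ℕ) :
    ∃ s : Polynomial ℚ, s.natDegree ≤ p ∧ ∀ n : ℕ,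
      ∑ q ∈ Finset.range n, (q : ℚ) ^ (p + 1)
        = (n : ℚ) ^ (p + 2) / ((p : ℚ) + 2) - (n : ℚ) ^ (p + 1) / 2 + s.eval (n : ℚ) := by
  refine ⟨∑ i ∈ Finset.range p,
      Polynomial.C (_root_.bernoulli (i + 1 + 1) * ((p + 2).choose (i + 1 + 1)) / ((p : ℚ) + 2)) *
        Polynomial.X ^ (p - i), ?_, ?_⟩
  · apply Polynomial.natDegree_sum_le_of_forall_le
    intro i hi
    exact (Polynomial.natDegree_C_mul_X_pow_le _ _).trans (Nat.sub_le _ _)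
  · intro n
    have hc : ((p : ℚ) + 2) ≠ 0 := by positivity
    rw [sum_range_pow, Finset.sum_range_succ', Finset.sum_range_succ']
    rw [Polynomial.eval_finset_sum]
    have hterm : ∀ i ∈ Finset.range p,
        _root_.bernoulli (i + 1 + 1) * ↑((p + 1 + 1).choose (i + 1 + 1)) * (n : ℚ) ^ (p + 1 + 1 - (i + 1 + 1)) / (↑(p + 1) + 1)
          = (Polynomial.C (_root_.bernoulli (i + 1 + 1) * ((p + 2).choose (i + 1 + 1)) / ((p : ℚ) + 2)) *
              Polynomial.X ^ (p - i) : Polynomial ℚ).eval (n : ℚ) := by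
      intro i hi
      have h1 : p + 1 + 1 - (i + 1 + 1) = p - i := by omega
      have h2 : p + 1 + 1 = p + 2 := by omega
      rw [h1, h2]
      simp
      push_cast
      ring
    rw [Finset.sum_congr rfl hterm]
    generalize (∑ i ∈ Finset.range p, (Polynomial.C (_root_.bernoulli (i + 1 + 1) * ((p + 2).choose (i + 1 + 1)) / ((p : ℚ) + 2)) *
              Polynomial.X ^ (p - i) : Polynomial ℚ).eval (n : ℚ)) = S
    simp only [zero_add, _root_.bernoulli_zero, _root_.bernoulli_one, Nat.choose_zero_right, Nat.choose_one_right]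
    push_cast
    field_simp
    ring

lemma sum_poly (d : ℕ) (r : Polynomial ℚ) (h : r.natDegree ≤ d) :
    ∃ s : Polynomial ℚ, s.natDegree ≤ d + 1 ∧ ∀ n : ℕ,
      ∑ q ∈ Finset.range n, r.eval (q : ℚ) = s.eval (n : ℚ) := by
  refine ⟨∑ p ∈ Finset.range (d + 1), Polynomial.C (r.coeff p) *
      (∑ i ∈ Finset.range (p + 1),
        Polynomial.C (_root_.bernoulli i * ((p + 1).choose i) / ((p : ℚ) + 1)) *
          Polynomial.X ^ (p + 1 - i)), ?_, ?_⟩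
  · apply Polynomial.natDegree_sum_le_of_forall_le
    intro p hp
    refine Polynomial.natDegree_mul_le.trans ?_
    simp only [Polynomial.natDegree_C, zero_add]
    have hb : (∑ i ∈ Finset.range (p + 1),
        Polynomial.C (_root_.bernoulli i * ((p + 1).choose i) / ((p : ℚ) + 1)) *
          Polynomial.X ^ (p + 1 - i)).natDegree ≤ p + 1 :=
      Polynomial.natDegree_sum_le_of_forall_le _ _ fun i hi =>
        (Polynomial.natDegree_C_mul_X_pow_le _ _).trans (Nat.sub_le _ _)
    simp only [Finset.mem_range] at hp
    exact hb.trans (by omega)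
  · intro n
    have hFa : ∀ p : ℕ,
        (∑ i ∈ Finset.range (p + 1),
          Polynomial.C (_root_.bernoulli i * ((p + 1).choose i) / ((p : ℚ) + 1)) *
            Polynomial.X ^ (p + 1 - i) : Polynomial ℚ).eval (n : ℚ)
          = ∑ q ∈ Finset.range n, (q : ℚ) ^ p := by
      intro p
      rw [sum_range_pow, Polynomial.eval_finset_sum]
      apply Finset.sum_congr rfl
      intro i hi
      simp
      push_cast
      ring
    rw [Polynomial.eval_finset_sum]
    simp only [Polynomial.eval_mul, Polynomial.eval_C, hFa]
    symm
    calc ∑ p ∈ Finset.range (d + 1), r.coeff p * ∑ q ∈ Finset.range n, (q : ℚ) ^ p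
        = ∑ p ∈ Finset.range (d + 1), ∑ q ∈ Finset.range n, r.coeff p * (q : ℚ) ^ p := by
          simp [Finset.mul_sum]
      _ = ∑ q ∈ Finset.range n, ∑ p ∈ Finset.range (d + 1), r.coeff p * (q : ℚ) ^ p :=
          Finset.sum_comm
      _ = ∑ q ∈ Finset.range n, r.eval (q : ℚ) := by
          refine Finset.sum_congr rfl fun q _ => ?_
          rw [Polynomial.eval_eq_sum_range' (Nat.lt_succ_of_le h)]

lemma shift_pow (e : ℕ) :
    ∃ t : Polynomial ℚ, t.natDegree ≤ e - 1 ∧ ∀ x : ℚ,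
      (x + 1) ^ (e + 1) = x ^ (e + 1) + ((e : ℚ) + 1) * x ^ e + t.eval x := by
  refine ⟨∑ i ∈ Finset.range e, Polynomial.C (((e + 1).choose i : ℕ) : ℚ) * Polynomial.X ^ i,
    ?_, ?_⟩
  · apply Polynomial.natDegree_sum_le_of_forall_le
    intro i hi
    refine (Polynomial.natDegree_C_mul_X_pow_le _ _).trans ?_
    simp only [Finset.mem_range] at hi; omega
  · intro x
    rw [add_pow, Finset.sum_range_succ, Finset.sum_range_succ, Polynomial.eval_finset_sum]
    have hterm : ∀ i ∈ Finset.range e,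
        x ^ i * (1 : ℚ) ^ (e + 1 - i) * ((e + 1).choose i : ℕ)
          = (Polynomial.C (((e + 1).choose i : ℕ) : ℚ) * Polynomial.X ^ i : Polynomial ℚ).eval x := by
      intro i hi
      simp
      ring
    rw [Finset.sum_congr rfl hterm]
    simp only [Nat.choose_self, Nat.choose_succ_self_right, one_pow, mul_one, Nat.cast_one,
      Nat.sub_self, pow_zero, Nat.cast_add]
    push_cast
    ring

lemma key (k : ℕ) : ∀ m : ℕ, 1 ≤ m → m ≤ k →
    ∃ r : Polynomial ℚ, r.natDegree ≤ 2 * m - 2 ∧ ∀ j : ℕ, j ≤ k →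
      P k m j = Acoef m * (j : ℚ) ^ (2 * m) + Bcoef m * (j : ℚ) ^ (2 * m - 1)
        + r.eval (j : ℚ) := by
  intro m hm
  induction m, hm using Nat.le_induction with
  | base =>
    intro hk
    set Cst : ℚ := ∑ q ∈ Finset.Icc 1 (k - 1), (q : ℚ) * P k 0 (q + 1) with hCst
    refine ⟨Polynomial.C Cst, by simp, ?_⟩
    intro j hj
    have hP : P k 1 j = Cst - ∑ q ∈ Finset.Icc 1 (j - 1), (q : ℚ) * P k 0 (q + 1) := rfl
    rw [hP, sum_Icc_one (fun q => (q : ℚ) * P k 0 (q + 1)) (by simp) j]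
    have hP0 : ∀ q : ℕ, P k 0 (q + 1) = 1 := fun q => rfl
    simp only [hP0, mul_one]
    rw [gauss]
    simp only [Polynomial.eval_C, Acoef, Bcoef, Nat.factorial_one, pow_one]
    push_cast
    ring
  | succ m hm ih =>
    intro hk
    obtain ⟨n, rfl⟩ : ∃ n, m = n + 1 := ⟨m - 1, by omega⟩
    obtain ⟨r, hrdeg, hr⟩ := ih (by omega)
    have hrdeg' : r.natDegree ≤ 2 * n := by omega
    obtain ⟨t1, ht1deg, ht1⟩ := shift_pow (2 * n + 1)
    obtain ⟨t2, ht2deg, ht2⟩ := shift_pow (2 * n)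
    set Am := Acoef (n + 1) with hAm
    set Bm := Bcoef (n + 1) with hBm
    set Dm : ℚ := Am * (2 * (n : ℚ) + 2) + Bm with hDm
    set u : Polynomial ℚ := Polynomial.X * (Polynomial.C Am * t1
      + Polynomial.C (Bm * (2 * (n : ℚ) + 1)) * Polynomial.X ^ (2 * n)
      + Polynomial.C Bm * t2 + r.comp (Polynomial.X + 1)) with hu
    have hudeg : u.natDegree ≤ 2 * n + 1 := by
      refine Polynomial.natDegree_mul_le.trans ?_
      have h1 : (Polynomial.C Am * t1).natDegree ≤ 2 * n :=
        Polynomial.natDegree_mul_le.trans (by simp; omega)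
      have h2 : (Polynomial.C (Bm * (2 * (n : ℚ) + 1)) * Polynomial.X ^ (2 * n)).natDegree
          ≤ 2 * n := Polynomial.natDegree_C_mul_X_pow_le _ _
      have h3 : (Polynomial.C Bm * t2).natDegree ≤ 2 * n :=
        Polynomial.natDegree_mul_le.trans (by simp; omega)
      have h4 : (r.comp (Polynomial.X + 1)).natDegree ≤ 2 * n := by
        refine Polynomial.natDegree_comp_le.trans ?_
        have : (Polynomial.X + 1 : Polynomial ℚ).natDegree ≤ 1 := by
          refine (Polynomial.natDegree_add_le _ _).trans (by simp)
        calc r.natDegree * (Polynomial.X + 1 : Polynomial ℚ).natDegree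
            ≤ 2 * n * 1 := Nat.mul_le_mul hrdeg' this
          _ = 2 * n := by omega
      have := Polynomial.natDegree_add_le
        (Polynomial.C Am * t1 + Polynomial.C (Bm * (2 * (n : ℚ) + 1)) * Polynomial.X ^ (2 * n)
          + Polynomial.C Bm * t2) (r.comp (Polynomial.X + 1))
      have h5 := Polynomial.natDegree_add_le
        (Polynomial.C Am * t1 + Polynomial.C (Bm * (2 * (n : ℚ) + 1)) * Polynomial.X ^ (2 * n))
        (Polynomial.C Bm * t2)
      have h6 := Polynomial.natDegree_add_le (Polynomial.C Am * t1)
        (Polynomial.C (Bm * (2 * (n : ℚ) + 1)) * Polynomial.X ^ (2 * n))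
      simp only [Polynomial.natDegree_X]
      omega
    have hueval : ∀ q : ℕ, u.eval (q : ℚ)
        = (q : ℚ) * (Am * t1.eval (q : ℚ) + Bm * (2 * (n : ℚ) + 1) * (q : ℚ) ^ (2 * n)
          + Bm * t2.eval (q : ℚ) + r.eval ((q : ℚ) + 1)) := by
      intro q
      simp [hu, Polynomial.eval_comp]
    obtain ⟨s1, hs1deg, hs1⟩ := sum_pow_split (2 * n + 2)
    obtain ⟨s2, hs2deg, hs2⟩ := sum_pow_split (2 * n + 1)
    obtain ⟨s3, hs3deg, hs3⟩ := sum_poly (2 * n + 1) u hudeg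
    set Cst : ℚ := ∑ q ∈ Finset.Icc 1 (k - (n + 1 + 1)), (q : ℚ) * P k (n + 1) (q + 1) with hCst
    refine ⟨Polynomial.C Cst + Polynomial.C (Dm / 2) * Polynomial.X ^ (2 * n + 2)
      - Polynomial.C Am * s1 - Polynomial.C Dm * s2 - s3, ?_, ?_⟩
    · have h1 : (Polynomial.C Cst + Polynomial.C (Dm / 2) * Polynomial.X ^ (2 * n + 2)
          : Polynomial ℚ).natDegree ≤ 2 * n + 2 :=
        (Polynomial.natDegree_add_le _ _).trans (by
          simp only [Polynomial.natDegree_C]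
          exact max_le (by omega) (Polynomial.natDegree_C_mul_X_pow_le _ _))
      have h2 : (Polynomial.C Am * s1).natDegree ≤ 2 * n + 2 :=
        Polynomial.natDegree_mul_le.trans (by simp; omega)
      have h3 : (Polynomial.C Dm * s2).natDegree ≤ 2 * n + 2 :=
        Polynomial.natDegree_mul_le.trans (by simp; omega)
      have g1 := Polynomial.natDegree_sub_le
        (Polynomial.C Cst + Polynomial.C (Dm / 2) * Polynomial.X ^ (2 * n + 2)
          - Polynomial.C Am * s1 - Polynomial.C Dm * s2) s3
      have g2 := Polynomial.natDegree_sub_le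
        (Polynomial.C Cst + Polynomial.C (Dm / 2) * Polynomial.X ^ (2 * n + 2)
          - Polynomial.C Am * s1) (Polynomial.C Dm * s2)
      have g3 := Polynomial.natDegree_sub_le
        (Polynomial.C Cst + Polynomial.C (Dm / 2) * Polynomial.X ^ (2 * n + 2))
        (Polynomial.C Am * s1)
      omega
    · intro j hj
      have hP : P k (n + 1 + 1) j = Cst
          - ∑ q ∈ Finset.Icc 1 (j - 1), (q : ℚ) * P k (n + 1) (q + 1) := rfl
      rw [hP, sum_Icc_one (fun q => (q : ℚ) * P k (n + 1) (q + 1)) (by simp)]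
      have hsum : ∑ q ∈ Finset.range j, (q : ℚ) * P k (n + 1) (q + 1)
          = ∑ q ∈ Finset.range j, (Am * (q : ℚ) ^ (2 * n + 2 + 1)
            + Dm * (q : ℚ) ^ (2 * n + 1 + 1) + u.eval (q : ℚ)) := by
        refine Finset.sum_congr rfl fun q hq => ?_
        simp only [Finset.mem_range] at hq
        have hq' : q + 1 ≤ k := by omega
        rw [hr (q + 1) hq']
        have e1 : 2 * (n + 1) = 2 * n + 1 + 1 := by omega
        have e2 : 2 * (n + 1) - 1 = 2 * n + 1 := by omega
        rw [e2, e1]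
        push_cast
        rw [ht1 (q : ℚ), ht2 (q : ℚ), hueval q]
        push_cast
        ring
      rw [hsum]
      rw [Finset.sum_add_distrib, Finset.sum_add_distrib, ← Finset.mul_sum, ← Finset.mul_sum,
        hs1 j, hs2 j, hs3 j]
      have e3 : 2 * (n + 1 + 1) = 2 * n + 2 + 2 := by omega
      have e4 : 2 * (n + 1 + 1) - 1 = 2 * n + 2 + 1 := by omega
      rw [e4, e3]
      have hA2 : Acoef (n + 1 + 1) = -Am / (2 * ((n : ℚ) + 1) + 2) := by
        rw [Acoef_succ]; push_cast; ring
      have hB2 : Bcoef (n + 1 + 1)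
          = Am / 2 - (Am * (2 * ((n : ℚ) + 1)) + Bm) / (2 * ((n : ℚ) + 1) + 1) := by
        rw [Bcoef_succ]; push_cast; ring
      rw [hA2, hB2]
      simp only [Polynomial.eval_sub, Polynomial.eval_add, Polynomial.eval_mul,
        Polynomial.eval_C, Polynomial.eval_pow, Polynomial.eval_X, hDm]
      have hd1 : (2 * (n : ℚ) + 2) + 2 ≠ 0 := by positivity
      have hd2 : (2 * (n : ℚ) + 1) + 2 ≠ 0 := by positivity
      have hd3 : 2 * ((n : ℚ) + 1) + 2 ≠ 0 := by positivity
      have hd4 : 2 * ((n : ℚ) + 1) + 1 ≠ 0 := by positivity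
      push_cast
      field_simp
      ring

/-- For all integers `k` and `m` with `1 ≤ m ≤ k` there exists a
single-variable polynomial `r` over `ℚ` (depending on `k` and `m`) of degree at most
`max(2m−2,0)` (note `2*m - 2` is truncated natural subtraction), such that for every
integer `j` with `0 ≤ j ≤ k`:
`P_{k,m}(j) = (−1)^m (j^{2m} + (1/3) m (2m−5) j^{2m−1}) / (2^m m!) + r(j)`. -/
theorem P_leading_terms (k m : ℕ) (hm : 1 ≤ m) (hmk : m ≤ k) :
    ∃ r : Polynomial ℚ, r.natDegree ≤ 2 * m - 2 ∧
      ∀ j : ℕ, j ≤ k →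
        P k m j =
          (-1 : ℚ) ^ m *
              ((j : ℚ) ^ (2 * m) +
                (1 / 3 : ℚ) * (m : ℚ) * (2 * (m : ℚ) - 5) * (j : ℚ) ^ (2 * m - 1)) /
              (2 ^ m * (Nat.factorial m : ℚ)) +
            r.eval (j : ℚ) := by
  obtain ⟨r, hdeg, hval⟩ := key k m hm hmk
  refine ⟨r, hdeg, ?_⟩
  intro j hj
  rw [hval j hj]
  have h2 : (2 : ℚ) ^ m ≠ 0 := by positivity
  have hf : ((m.factorial : ℚ)) ≠ 0 := Nat.cast_ne_zero.2 m.factorial_ne_zero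
  simp only [Acoef, Bcoef]
  field_simp
end

section
/- For every integer v ≥ 1 there exists a single-variable polynomial r_v (depending only on v) with rational coefficients of degree at most max(2v−2,0), such that for every integer j with j ≥ v: P_{j,v}(1) = ( j^{2v} − (1/3) v (2v+1) j^{2v−1} ) / (2^v v!) + r_v(j). -/
open Finset Polynomial

/-- elementary symmetric sum of the elements of `S`, in `ℚ`. -/
def Esym (m : ℕ) (S : Finset ℕ) : ℚ := ∑ A ∈ S.powersetCard m, ∏ i ∈ A, (i : ℚ)

lemma Esym_zero (S : Finset ℕ) : Esym 0 S = 1 := by simp [Esym]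

lemma Esym_of_card_lt {m : ℕ} {S : Finset ℕ} (h : S.card < m) : Esym m S = 0 := by
  simp [Esym, Finset.powersetCard_eq_empty.mpr h]

lemma Esym_insert {x : ℕ} {S : Finset ℕ} (h : x ∉ S) (m : ℕ) :
    Esym (m + 1) (insert x S) = x * Esym m S + Esym (m + 1) S := by
  classical
  rw [Esym, Finset.powersetCard_succ_insert h]
  rw [Finset.sum_union]
  · rw [Finset.sum_image]
    · have : ∀ A ∈ S.powersetCard m, (∏ i ∈ insert x A, (i : ℚ)) = x * ∏ i ∈ A, (i : ℚ) := by
        intro A hA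
        have hxA : x ∉ A := fun hx => h ((Finset.mem_powersetCard.mp hA).1 hx)
        rw [Finset.prod_insert hxA]
      rw [Finset.sum_congr rfl this, ← Finset.mul_sum]
      rw [add_comm]
      rfl
    · intro A hA B hB hAB
      have hxA : x ∉ A := fun hx => h ((Finset.mem_powersetCard.mp hA).1 hx)
      have hxB : x ∉ B := fun hx => h ((Finset.mem_powersetCard.mp hB).1 hx)
      rw [← Finset.erase_insert hxA, ← Finset.erase_insert hxB, hAB]
  · rw [Finset.disjoint_left]
    intro A hA hA'
    obtain ⟨B, _, rfl⟩ := Finset.mem_image.mp hA'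
    have : x ∈ (insert x B : Finset ℕ) := Finset.mem_insert_self x B
    exact h ((Finset.mem_powersetCard.mp hA).1 this)

lemma Icc_insert_left {j n : ℕ} (h : j ≤ n) :
    Finset.Icc j n = insert j (Finset.Icc (j + 1) n) := by
  ext t; simp only [Finset.mem_Icc, Finset.mem_insert]; omega

lemma Icc_insert_top (n : ℕ) :
    Finset.Icc 1 (n + 1) = insert (n + 1) (Finset.Icc 1 n) := by
  ext t; simp only [Finset.mem_Icc, Finset.mem_insert]; omega

/-- expansion of `Esym` of an interval by smallest element -/
lemma Esym_min (m : ℕ) : ∀ (t j n : ℕ), n + 1 - j ≤ t →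
    Esym (m + 1) (Finset.Icc j n) =
      ∑ q ∈ Finset.Icc j (n - m), (q : ℚ) * Esym m (Finset.Icc (q + 1) n) := by
  intro t
  induction t with
  | zero =>
    intro j n ht
    have h1 : Finset.Icc j n = ∅ := Finset.Icc_eq_empty (by omega)
    have h2 : Finset.Icc j (n - m) = ∅ := Finset.Icc_eq_empty (by omega)
    rw [h1, h2, Finset.sum_empty, Esym_of_card_lt (by simp)]
  | succ t ih =>
    intro j n ht
    by_cases hj : j ≤ n - m
    · have hjn : j ≤ n := le_trans hj (Nat.sub_le n m)
      rw [Icc_insert_left hjn, Esym_insert (by simp) m,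
        ih (j + 1) n (by omega), Icc_insert_left hj,
        Finset.sum_insert (by simp)]
    · have hcard : (Finset.Icc j n).card < m + 1 := by rw [Nat.card_Icc]; omega
      rw [Esym_of_card_lt hcard, Finset.Icc_eq_empty (by omega), Finset.sum_empty]

/-- expansion of `Esym` of `{1,…,n}` by largest element -/
lemma Esym_max (m n : ℕ) :
    Esym (m + 1) (Finset.Icc 1 n) =
      ∑ q ∈ Finset.Icc 1 n, (q : ℚ) * Esym m (Finset.Icc 1 (q - 1)) := by
  induction n with
  | zero => simp [Esym_of_card_lt]; exact Esym_of_card_lt (by simp)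
  | succ n ih =>
    rw [Finset.sum_Icc_succ_top (by omega), ← ih, Icc_insert_top,
      Esym_insert (by simp) m]
    simp only [Nat.add_sub_cancel]
    ring

lemma P_eq_Esym : ∀ (m k j : ℕ), 1 ≤ j → j + m ≤ k + 1 →
    P k m j = Esym m (Finset.Icc j (k - 1)) := by
  intro m
  induction m with
  | zero => intro k j _ _; rw [Esym_zero]; rfl
  | succ m ih =>
    intro k j hj hjk
    have hk : m + 1 ≤ k := by omega
    rw [P]
    have e1 : ∀ q ∈ Finset.Icc 1 (k - (m + 1)),
        (q : ℚ) * P k m (q + 1) = (q : ℚ) * Esym m (Finset.Icc (q + 1) (k - 1)) := by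
      intro q hq
      rw [Finset.mem_Icc] at hq
      rw [ih k (q + 1) (by omega) (by omega)]
    have e2 : ∀ q ∈ Finset.Icc 1 (j - 1),
        (q : ℚ) * P k m (q + 1) = (q : ℚ) * Esym m (Finset.Icc (q + 1) (k - 1)) := by
      intro q hq
      rw [Finset.mem_Icc] at hq
      rw [ih k (q + 1) (by omega) (by omega)]
    rw [Finset.sum_congr rfl e1, Finset.sum_congr rfl e2]
    have hIoc1 : Finset.Icc 1 (k - (m + 1)) = Finset.Ioc 0 (k - (m + 1)) := Finset.Icc_add_one_left_eq_Ioc 0 _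
    have hIoc2 : Finset.Icc 1 (j - 1) = Finset.Ioc 0 (j - 1) := Finset.Icc_add_one_left_eq_Ioc 0 _
    rw [hIoc1, hIoc2]
    have hsplit := Finset.sum_Ioc_consecutive
      (fun q => (q : ℚ) * Esym m (Finset.Icc (q + 1) (k - 1)))
      (Nat.zero_le (j - 1)) (show j - 1 ≤ k - (m + 1) by omega)
    rw [← hsplit, add_sub_cancel_left]
    have : Finset.Ioc (j - 1) (k - (m + 1)) = Finset.Icc j (k - (m + 1)) := by
      rw [← Finset.Icc_add_one_left_eq_Ioc]; congr 1; omega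
    rw [this]
    have hmin := Esym_min m (k - j) j (k - 1) (by omega)
    rw [show (k - 1) - m = k - (m + 1) from by omega] at hmin
    rw [← hmin]



noncomputable def Phi (e : ℕ) : Polynomial ℚ :=
  ∑ i ∈ Finset.range (e + 1),
    Polynomial.C (_root_.bernoulli i * ((e + 1).choose i) / (e + 1)) * Polynomial.X ^ (e + 1 - i)

lemma Phi_eval (e n : ℕ) : (Phi e).eval (n : ℚ) = ∑ q ∈ Finset.range n, (q : ℚ) ^ e := by
  rw [sum_range_pow, Phi, Polynomial.eval_finset_sum]
  refine Finset.sum_congr rfl fun i _ => ?_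
  simp only [Polynomial.eval_mul, Polynomial.eval_C, Polynomial.eval_pow, Polynomial.eval_X]
  ring

lemma Phi_natDegree (e : ℕ) : (Phi e).natDegree ≤ e + 1 := by
  refine Polynomial.natDegree_sum_le_of_forall_le _ _ fun i _ => ?_
  refine le_trans (Polynomial.natDegree_C_mul_le _ _) ?_
  rw [Polynomial.natDegree_X_pow]
  omega

lemma Phi_coeff_top (e : ℕ) : (Phi e).coeff (e + 1) = 1 / (e + 1) := by
  rw [Phi, Polynomial.finset_sum_coeff]
  rw [Finset.sum_eq_single 0]
  · simp
  · intro i hi hne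
    rw [Polynomial.coeff_C_mul, Polynomial.coeff_X_pow, if_neg (by rw [Finset.mem_range] at hi; omega), mul_zero]
  · intro h; simp at h

lemma Phi_coeff_snd (e : ℕ) (he : 1 ≤ e) : (Phi e).coeff e = -(1 / 2) := by
  rw [Phi, Polynomial.finset_sum_coeff]
  rw [Finset.sum_eq_single 1]
  · rw [Polynomial.coeff_C_mul, Polynomial.coeff_X_pow, if_pos (by omega)]
    rw [_root_.bernoulli_one, Nat.choose_one_right]
    have : ((e : ℚ) + 1) ≠ 0 := by positivity
    push_cast
    field_simp
  · intro i hi hne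
    rw [Polynomial.coeff_C_mul, Polynomial.coeff_X_pow, if_neg (by rw [Finset.mem_range] at hi; omega), mul_zero]
  · intro h; rw [Finset.mem_range] at h; omega

lemma sum_poly_step (d : ℕ) (hd : 1 ≤ d) (p : Polynomial ℚ) (hdeg : p.natDegree ≤ d)
    (f : ℕ → ℚ) (hf : ∀ q : ℕ, 1 ≤ q → f q = p.eval (q : ℚ)) :
    ∃ Q : Polynomial ℚ, Q.natDegree ≤ d + 2 ∧
      Q.coeff (d + 2) = p.coeff d / ((d : ℚ) + 2) ∧
      Q.coeff (d + 1) = -(p.coeff d) / 2 + p.coeff (d - 1) / ((d : ℚ) + 1) ∧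
      ∀ n : ℕ, Q.eval (n : ℚ) = ∑ q ∈ Finset.range n, (q : ℚ) * f q := by
  obtain ⟨d', rfl⟩ : ∃ d', d = d' + 1 := ⟨d - 1, by omega⟩
  refine ⟨∑ i ∈ Finset.range (d' + 2), Polynomial.C (p.coeff i) * Phi (i + 1), ?_, ?_, ?_, ?_⟩
  · refine Polynomial.natDegree_sum_le_of_forall_le _ _ fun i hi => ?_
    refine le_trans (Polynomial.natDegree_C_mul_le _ _) (le_trans (Phi_natDegree _) ?_)
    rw [Finset.mem_range] at hi; omega
  · rw [Polynomial.finset_sum_coeff, Finset.sum_range_succ, Finset.sum_range_succ]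
    have h0 : ∀ i ∈ Finset.range d', (Polynomial.C (p.coeff i) * Phi (i + 1)).coeff (d' + 1 + 2) = 0 := by
      intro i hi
      rw [Finset.mem_range] at hi
      rw [Polynomial.coeff_C_mul,
        Polynomial.coeff_eq_zero_of_natDegree_lt (lt_of_le_of_lt (Phi_natDegree _) (by omega)), mul_zero]
    rw [Finset.sum_eq_zero h0, zero_add]
    rw [Polynomial.coeff_C_mul, Polynomial.coeff_C_mul,
      Polynomial.coeff_eq_zero_of_natDegree_lt (lt_of_le_of_lt (Phi_natDegree (d' + 1)) (by omega)),
      mul_zero, zero_add]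
    have := Phi_coeff_top (d' + 2)
    rw [show d' + 2 + 1 = d' + 1 + 2 from by omega] at this
    rw [this]
    push_cast
    ring
  · rw [Polynomial.finset_sum_coeff, Finset.sum_range_succ, Finset.sum_range_succ]
    have h0 : ∀ i ∈ Finset.range d', (Polynomial.C (p.coeff i) * Phi (i + 1)).coeff (d' + 1 + 1) = 0 := by
      intro i hi
      rw [Finset.mem_range] at hi
      rw [Polynomial.coeff_C_mul,
        Polynomial.coeff_eq_zero_of_natDegree_lt (lt_of_le_of_lt (Phi_natDegree _) (by omega)), mul_zero]
    rw [Finset.sum_eq_zero h0, zero_add]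
    rw [Polynomial.coeff_C_mul, Polynomial.coeff_C_mul]
    rw [show d' + 1 + 1 = (d' + 1) + 1 from rfl, Phi_coeff_top (d' + 1)]
    have := Phi_coeff_snd (d' + 2) (by omega)
    rw [show d' + 2 = d' + 1 + 1 from rfl] at this
    rw [this]
    simp only [Nat.add_sub_cancel]
    push_cast
    ring
  · intro n
    rw [Polynomial.eval_finset_sum]
    have : ∀ i ∈ Finset.range (d' + 2),
        (Polynomial.C (p.coeff i) * Phi (i + 1)).eval (n : ℚ)
          = ∑ q ∈ Finset.range n, p.coeff i * ((q : ℚ) ^ (i + 1)) := by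
      intro i _
      rw [Polynomial.eval_mul, Polynomial.eval_C, Phi_eval, Finset.mul_sum]
    rw [Finset.sum_congr rfl this, Finset.sum_comm]
    refine Finset.sum_congr rfl fun q _ => ?_
    rcases Nat.eq_zero_or_pos q with hq | hq
    · subst hq; simp
    · rw [hf q hq, Polynomial.eval_eq_sum_range' (show p.natDegree < d' + 2 by omega)]
      rw [Finset.mul_sum]
      refine Finset.sum_congr rfl fun i _ => ?_
      ring



lemma gauss_s10 (n : ℕ) : ∑ q ∈ Finset.Icc 1 n, (q : ℚ) = n * (n + 1) / 2 := by
  induction n with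
  | zero => simp
  | succ n ih =>
    rw [Finset.sum_Icc_succ_top (by omega), ih]
    push_cast
    ring

lemma base_esym (n : ℕ) : Esym 1 (Finset.Icc 1 n) = n * (n + 1) / 2 := by
  rw [show (1 : ℕ) = 0 + 1 from rfl, Esym_max 0 n]
  simp only [Esym_zero, mul_one]
  exact gauss_s10 n

lemma Icc_sum_eq_range (g : ℕ → ℚ) (q : ℕ) (hq : 1 ≤ q) :
    ∑ t ∈ Finset.Icc 1 (q - 1), (t : ℚ) * g t = ∑ t ∈ Finset.range q, (t : ℚ) * g t := by
  refine Finset.sum_subset ?_ ?_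
  · intro t ht
    rw [Finset.mem_Icc] at ht
    rw [Finset.mem_range]
    omega
  · intro t ht ht'
    rw [Finset.mem_range] at ht
    rw [Finset.mem_Icc] at ht'
    have : t = 0 := by omega
    subst this
    simp

lemma invB (m : ℕ) (hm : 1 ≤ m) : ∃ p : Polynomial ℚ, p.natDegree ≤ 2 * m ∧
    p.coeff (2 * m) = 1 / (2 ^ m * (Nat.factorial m : ℚ)) ∧
    p.coeff (2 * m - 1) =
      -((m : ℚ) * (2 * (m : ℚ) + 1) / 3) * (1 / (2 ^ m * (Nat.factorial m : ℚ))) ∧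
    ∀ q : ℕ, 1 ≤ q → Esym m (Finset.Icc 1 (q - 1)) = p.eval (q : ℚ) := by
  induction m, hm using Nat.le_induction with
  | base =>
    refine ⟨Polynomial.C (1/2 : ℚ) * Polynomial.X ^ 2 + Polynomial.C (-(1/2) : ℚ) * Polynomial.X,
      ?_, ?_, ?_, ?_⟩
    · refine le_trans (Polynomial.natDegree_add_le _ _) ?_
      simp only [max_le_iff]
      constructor
      · exact le_trans (Polynomial.natDegree_C_mul_le _ _) (by rw [Polynomial.natDegree_X_pow])
      · exact le_trans (Polynomial.natDegree_C_mul_le _ _) (by rw [Polynomial.natDegree_X]; omega)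
    · simp [Polynomial.coeff_X, Nat.factorial]
    · simp [Polynomial.coeff_X, Nat.factorial]
      norm_num
    · intro q hq
      rw [base_esym (q - 1)]
      have hc : ((q - 1 : ℕ) : ℚ) = (q : ℚ) - 1 := by
        rw [Nat.cast_sub hq]; norm_num
      rw [hc]
      simp only [Polynomial.eval_add, Polynomial.eval_mul, Polynomial.eval_C,
        Polynomial.eval_pow, Polynomial.eval_X]
      ring
  | succ m hm ih =>
    obtain ⟨p, hpdeg, hptop, hpsnd, hpev⟩ := ih
    obtain ⟨Q, hQdeg, hQtop, hQsnd, hQev⟩ :=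
      sum_poly_step (2 * m) (by omega) p hpdeg (fun q => Esym m (Finset.Icc 1 (q - 1))) hpev
    have hfac : ((Nat.factorial m : ℚ)) ≠ 0 := Nat.cast_ne_zero.mpr (Nat.factorial_ne_zero m)
    have h2m : (2 : ℚ) ^ m ≠ 0 := by positivity
    refine ⟨Q, ?_, ?_, ?_, ?_⟩
    · rw [show 2 * (m + 1) = 2 * m + 2 from by ring]; exact hQdeg
    · rw [show 2 * (m + 1) = 2 * m + 2 from by ring, hQtop, hptop, Nat.factorial_succ]
      push_cast
      field_simp
      ring
    · rw [show 2 * (m + 1) - 1 = 2 * m + 1 from by omega, hQsnd, hptop, hpsnd,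
        Nat.factorial_succ]
      push_cast
      field_simp
      ring
    · intro q hq
      rw [hQev q, Esym_max m (q - 1), Icc_sum_eq_range _ q hq]

/-- For every integer `v ≥ 1` there exists a single-variable
polynomial `r_v` over `ℚ` (depending only on `v`) of degree at most `max(2v−2,0)`
(note `2*v - 2` is truncated natural subtraction), such that for every integer
`j ≥ v`:
`P_{j,v}(1) = (j^{2v} − (1/3) v (2v+1) j^{2v−1}) / (2^v v!) + r_v(j)`. -/
theorem P_at_one_leading_terms (v : ℕ) (hv : 1 ≤ v) :
    ∃ r : Polynomial ℚ, r.natDegree ≤ 2 * v - 2 ∧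
      ∀ j : ℕ, v ≤ j →
        P j v 1 =
          ((j : ℚ) ^ (2 * v) -
              (1 / 3 : ℚ) * (v : ℚ) * (2 * (v : ℚ) + 1) * (j : ℚ) ^ (2 * v - 1)) /
              (2 ^ v * (Nat.factorial v : ℚ)) +
            r.eval (j : ℚ) := by
  obtain ⟨p, hdeg, htop, hsnd, heval⟩ := invB v hv
  set a : ℚ := 1 / (2 ^ v * (Nat.factorial v : ℚ)) with ha
  refine ⟨p - Polynomial.C a * Polynomial.X ^ (2 * v)
      - Polynomial.C (-((v : ℚ) * (2 * (v : ℚ) + 1) / 3) * a) * Polynomial.X ^ (2 * v - 1),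
    ?_, ?_⟩
  · rw [Polynomial.natDegree_le_iff_coeff_eq_zero]
    intro N hN
    simp only [Polynomial.coeff_sub, Polynomial.coeff_C_mul, Polynomial.coeff_X_pow]
    rcases eq_or_ne N (2 * v) with rfl | h1
    · rw [htop, if_pos rfl, if_neg (by omega)]
      ring
    · rcases eq_or_ne N (2 * v - 1) with rfl | h2
      · rw [hsnd, if_neg (by omega), if_pos rfl]
        ring
      · rw [Polynomial.coeff_eq_zero_of_natDegree_lt (lt_of_le_of_lt hdeg (by omega)),
          if_neg (by omega), if_neg (by omega)]
        ring
  · intro j hj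
    rw [P_eq_Esym v j 1 le_rfl (by omega), heval j (by omega)]
    simp only [Polynomial.eval_sub, Polynomial.eval_mul, Polynomial.eval_C,
      Polynomial.eval_pow, Polynomial.eval_X]
    have h2 : (2 : ℚ) ^ v ≠ 0 := by positivity
    have h3 : ((Nat.factorial v : ℚ)) ≠ 0 := Nat.cast_ne_zero.mpr (Nat.factorial_ne_zero v)
    rw [ha]
    field_simp
    ring
end

section
/- Let m ≥ 1 be an integer and let α, δ, γ, β be real numbers with γ ≠ 0 such that β/γ is not a nonpositive integer. Then Σ_{n=0}^{m−1} (−1)^n C(m−1,n) · (αn+δ)/(γn+β) = (α/γ)·δ(m−1) + (Γ(m) Γ(β/γ)/Γ(m+β/γ)) · (1/γ)(δ − αβ/γ), where δ(m−1) equals 1 if m = 1 and 0 otherwise, and Γ denotes the Gamma function. -/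
private lemma aux_ne (x : ℝ) (hx : ∀ n : ℕ, x ≠ -(n : ℝ)) (k : ℕ) :
    x + k ≠ 0 ∧ Real.Gamma (x + k) ≠ 0 := by
  constructor
  · intro h
    exact hx k (by linarith)
  · apply Real.Gamma_ne_zero
    intro n h
    apply hx (n + k)
    push_cast
    linarith

private lemma aux_key (M : ℕ) :
    ∀ x : ℝ, (∀ n : ℕ, x ≠ -(n : ℝ)) →
    ∑ n ∈ Finset.range (M + 1), (-1 : ℝ) ^ n * (M.choose n : ℝ) / (x + n) =
      (M.factorial : ℝ) * Real.Gamma x / Real.Gamma (x + (M + 1)) := by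
  induction M with
  | zero =>
    intro x hx
    obtain ⟨h0, hg⟩ := aux_ne x hx 0
    simp only [Nat.cast_zero, add_zero] at h0 hg
    simp only [Finset.sum_range_one, Nat.choose_self, Nat.factorial_zero]
    rw [show x + ((0 : ℕ) + 1 : ℝ) = x + 1 by push_cast; ring,
      Real.Gamma_add_one h0]
    push_cast
    field_simp
    simp [h0]
  | succ M ih =>
    intro x hx
    have hx1 : ∀ n : ℕ, x + 1 ≠ -(n : ℝ) := by
      intro n h
      apply hx (n + 1)
      push_cast
      linarith
    have step : ∑ n ∈ Finset.range (M + 1 + 1),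
        (-1 : ℝ) ^ n * ((M + 1).choose n : ℝ) / (x + n)
        = (∑ n ∈ Finset.range (M + 1), (-1 : ℝ) ^ n * (M.choose n : ℝ) / (x + n))
          - ∑ n ∈ Finset.range (M + 1), (-1 : ℝ) ^ n * (M.choose n : ℝ) / ((x + 1) + n) := by
      rw [Finset.sum_range_succ' (fun n => (-1 : ℝ) ^ n * ((M + 1).choose n : ℝ) / (x + n)) (M + 1)]
      have split : ∀ i ∈ Finset.range (M + 1),
          (-1 : ℝ) ^ (i + 1) * ((M + 1).choose (i + 1) : ℝ) / (x + (i + 1 : ℕ))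
          = (-1 : ℝ) ^ (i + 1) * (M.choose (i + 1) : ℝ) / (x + ((i + 1 : ℕ) : ℝ))
            - (-1 : ℝ) ^ i * (M.choose i : ℝ) / ((x + 1) + i) := by
        intro i _
        rw [Nat.choose_succ_succ]
        push_cast
        rw [show x + ((i : ℝ) + 1) = (x + 1) + i by ring]
        ring
      rw [Finset.sum_congr rfl split, Finset.sum_sub_distrib]
      have : ∑ i ∈ Finset.range (M + 1),
          (-1 : ℝ) ^ (i + 1) * (M.choose (i + 1) : ℝ) / (x + ((i + 1 : ℕ) : ℝ))
          + (-1 : ℝ) ^ 0 * (((M + 1).choose 0 : ℕ) : ℝ) / (x + (0 : ℕ))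
          = ∑ n ∈ Finset.range (M + 1), (-1 : ℝ) ^ n * (M.choose n : ℝ) / (x + n) := by
        rw [show (((M + 1).choose 0 : ℕ) : ℝ) = ((M.choose 0 : ℕ) : ℝ) by simp,
          ← Finset.sum_range_succ' (fun n => (-1 : ℝ) ^ n * (M.choose n : ℝ) / (x + n)) (M + 1),
          Finset.sum_range_succ]
        simp [Nat.choose_succ_self]
      linarith [this]
    rw [step, ih x hx, ih (x + 1) hx1]
    obtain ⟨hM1, hgM1⟩ := aux_ne x hx (M + 1)
    obtain ⟨hM2, hgM2⟩ := aux_ne x hx (M + 2)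
    obtain ⟨h0, hg0⟩ := aux_ne x hx 0
    simp only [Nat.cast_zero, add_zero] at h0 hg0
    push_cast at hM1 hgM1
    have e1 : Real.Gamma (x + 1) = x * Real.Gamma x := Real.Gamma_add_one h0
    have e2 : Real.Gamma (x + ((M : ℝ) + 1) + 1) = (x + ((M : ℝ) + 1)) * Real.Gamma (x + ((M : ℝ) + 1)) :=
      Real.Gamma_add_one hM1
    have c1 : x + 1 + ((M : ℝ) + 1) = x + ((M : ℝ) + 1) + 1 := by ring
    have c2 : x + (((M + 1 : ℕ) : ℝ) + 1) = x + ((M : ℝ) + 1) + 1 := by push_cast; ring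
    rw [c1, c2, e2, e1, Nat.factorial_succ]
    field_simp
    push_cast
    ring

/-- Let `m ≥ 1` be an integer and let `α`, `δ`, `γ`, `β` be real
numbers with `γ ≠ 0` such that `β/γ` is not a nonpositive integer.  Then
`Σ_{n=0}^{m−1} (−1)^n C(m−1,n) · (αn+δ)/(γn+β)
  = (α/γ)·δ(m−1) + (Γ(m) Γ(β/γ)/Γ(m+β/γ)) · (1/γ)(δ − αβ/γ)`,
where `δ(m−1)` equals `1` if `m = 1` and `0` otherwise, and `Γ` is the Gamma
function. -/
theorem binomial_sum_gamma_general (m : ℕ) (hm : 1 ≤ m) (α δ γ β : ℝ)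
    (hγ : γ ≠ 0) (hβγ : ∀ n : ℕ, β / γ ≠ -(n : ℝ)) :
    ∑ n ∈ Finset.range m,
        (-1 : ℝ) ^ n * (Nat.choose (m - 1) n : ℝ) *
          ((α * n + δ) / (γ * n + β)) =
      α / γ * (if m = 1 then (1 : ℝ) else 0) +
        Real.Gamma m * Real.Gamma (β / γ) / Real.Gamma ((m : ℝ) + β / γ) *
          ((1 / γ) * (δ - α * β / γ)) := by
  obtain ⟨M, rfl⟩ : ∃ M, m = M + 1 := ⟨m - 1, (Nat.succ_pred_eq_of_pos hm).symm⟩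
  simp only [Nat.add_sub_cancel]
  set x : ℝ := β / γ with hxdef
  have hterm : ∀ n ∈ Finset.range (M + 1),
      (-1 : ℝ) ^ n * (Nat.choose M n : ℝ) * ((α * n + δ) / (γ * n + β))
      = (-1 : ℝ) ^ n * (Nat.choose M n : ℝ) * (α / γ)
        + ((1 / γ) * (δ - α * β / γ)) * ((-1 : ℝ) ^ n * (Nat.choose M n : ℝ) / (x + n)) := by
    intro n _
    obtain ⟨hxn, -⟩ := aux_ne x hβγ n
    have hx' : x + (n : ℝ) = (γ * n + β) / γ := by
      rw [hxdef]; field_simp; ring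
    have hγn : γ * n + β ≠ 0 := by
      intro h
      apply hxn
      rw [hx', h, zero_div]
    rw [hx']
    have hD : (n:ℝ) * γ + β ≠ 0 := by rw [mul_comm]; exact hγn
    field_simp
    ring
  rw [Finset.sum_congr rfl hterm, Finset.sum_add_distrib, ← Finset.sum_mul,
    ← Finset.mul_sum, aux_key M x hβγ]
  have halt : ∑ n ∈ Finset.range (M + 1), (-1 : ℝ) ^ n * (Nat.choose M n : ℝ)
      = if M = 0 then 1 else 0 := by
    have := Int.alternating_sum_range_choose (n := M)
    have := congrArg (fun z : ℤ => (z : ℝ)) this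
    push_cast at this
    simpa using this
  rw [halt]
  have hMif : (if M + 1 = 1 then (1:ℝ) else 0) = (if M = 0 then (1:ℝ) else 0) := by
    simp [Nat.succ_eq_add_one]
  rw [hMif]
  rw [show (((M + 1 : ℕ) : ℝ)) = (M : ℝ) + 1 by push_cast; ring]
  rw [show Real.Gamma ((M : ℝ) + 1) = (M.factorial : ℝ) from Real.Gamma_nat_eq_factorial M]
  rw [show x + ((M : ℝ) + 1) = (M : ℝ) + 1 + x by ring]
  ring
end

section
/- Fix integers N ≥ 1 and k ≥ 0, and regard α_{N,k}(f) as a Laurent polynomial in f over ℚ. Then for every integer v with 0 ≤ v ≤ k, the coefficient of f^{k−v} in α_{N,k}(f) equals (−1)^k Σ_{m=v}^{k+v} ( Σ_{j=0}^{k} C(k,j) (−1)^{j+m} P_{j,v}(1) P_{k,m−v}(j) ) N^{k−m}. -/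
open LaurentPolynomial in
/-- The Laurent polynomial (in the indeterminate `f = T 1`) over `ℚ`
`α_{N,k}(f) = (−f)^k Σ_{j=0}^{k} C(k,j) (−1)^j f^{−j} (fN)_j (N−j)_{k−j}`, where
`(fN)_j = ∏_{i=0}^{j−1} (fN − i)` and `(N−j)_{k−j} = ∏_{i=0}^{k−j−1} (N−j−i)` is a
rational constant. -/
noncomputable def alphaL (N k : ℕ) : LaurentPolynomial ℚ :=
  (-T 1) ^ k *
    ∑ j ∈ Finset.range (k + 1),
      C ((Nat.choose k j : ℚ) * (-1) ^ j) * T (-(j : ℤ)) *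
        (∏ i ∈ Finset.range j, (C (N : ℚ) * T 1 - C (i : ℚ))) *
        C (∏ i ∈ Finset.range (k - j), ((N : ℚ) - (j : ℚ) - (i : ℚ)))

lemma P_rec (k m j : ℕ) : P k (m+1) j = P k (m+1) (j+1) + j * P k m (j+1) := by
  rcases j with _ | j
  · simp [P]
  · simp only [P, Nat.add_sub_cancel]
    rw [Finset.sum_Icc_succ_top (by omega : 1 ≤ j + 1)]
    push_cast
    ring

lemma P_zero (k m : ℕ) : P k m 0 = P k m 1 := by
  cases m <;> simp [P]

lemma P_vanish (k : ℕ) : ∀ m j, 1 ≤ m → j ≤ k → k < m + j → P k m j = 0 := by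
  intro m
  induction m with
  | zero => intro j h; omega
  | succ m ih =>
    intro j _ hjk hkm
    have h1 : Finset.Icc 1 (k - (m+1)) = Finset.Ioc 0 (k - (m+1)) := by
      rw [← Finset.Icc_add_one_left_eq_Ioc, zero_add]
    have h2 : Finset.Icc 1 (j - 1) = Finset.Ioc 0 (j - 1) := by
      rw [← Finset.Icc_add_one_left_eq_Ioc, zero_add]
    have hAB : k - (m+1) ≤ j - 1 := by omega
    simp only [P, h1, h2]
    rw [← Finset.sum_Ioc_consecutive _ (Nat.zero_le _) hAB]
    rw [sub_add_cancel_left]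
    rw [neg_eq_zero]
    apply Finset.sum_eq_zero
    intro q hq
    simp only [Finset.mem_Ioc] at hq
    rcases m with _ | m
    · omega
    · rw [ih (q+1) (by omega) (by omega) (by omega)]
      ring

lemma prodP {R : Type*} [CommRing R] (φ : ℚ →+* R) (k : ℕ) :
    ∀ d j, j + d = k → ∀ y : R,
      ∏ i ∈ Finset.Ico j k, (y - φ i) =
        ∑ m ∈ Finset.range (d+1), φ ((-1)^m * P k m j) * y^(d-m) := by
  intro d
  induction d with
  | zero =>
    intro j hj y
    subst hj
    simp [P]
  | succ n ih =>
    intro j hj y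
    have hjk : j < k := by omega
    rw [Finset.prod_eq_prod_Ico_succ_bot hjk, ih (j+1) (by omega) y]
    have hvan : P k (n+1) (j+1) = 0 :=
      P_vanish k (n+1) (j+1) (by omega) (by omega) (by omega)
    rw [Finset.sum_range_succ' (fun m => φ ((-1)^m * P k m j) * y^(n+1-m)) (n+1)]
    have expand : ∀ m ∈ Finset.range (n+1),
        φ ((-1)^(m+1) * P k (m+1) j) * y^(n+1-(m+1)) =
          (φ ((-1)^(m+1) * P k (m+1) (j+1)) * y^(n-m)) +
            (- φ (j:ℚ)) * (φ ((-1)^m * P k m (j+1)) * y^(n-m)) := by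
      intro m hm
      rw [P_rec k m j, Nat.add_sub_add_right]
      push_cast [map_mul, map_add, map_pow, map_neg, map_one]
      ring
    rw [Finset.sum_congr rfl expand, Finset.sum_add_distrib, ← Finset.mul_sum]
    have hA : ∑ m ∈ Finset.range (n+1), φ ((-1)^(m+1) * P k (m+1) (j+1)) * y^(n-m)
        = y * (∑ m ∈ Finset.range (n+1), φ ((-1)^m * P k m (j+1)) * y^(n-m)) - y^(n+1) := by
      rw [Finset.mul_sum,
        Finset.sum_range_succ' (fun m => y * (φ ((-1)^m * P k m (j+1)) * y^(n-m))) n,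
        Finset.sum_range_succ (fun m => φ ((-1)^(m+1) * P k (m+1) (j+1)) * y^(n-m)) n]
      have h1 : ∀ m ∈ Finset.range n,
          φ ((-1)^(m+1) * P k (m+1) (j+1)) * y^(n-m)
            = y * (φ ((-1)^(m+1) * P k (m+1) (j+1)) * y^(n-(m+1))) := by
        intro m hm
        simp only [Finset.mem_range] at hm
        have : y ^ (n - m) = y * y ^ (n - (m+1)) := by
          rw [← pow_succ']
          congr 1
          omega
        rw [this]
        ring
      rw [Finset.sum_congr rfl h1]
      have h2 : P k 0 (j+1) = 1 := rfl
      simp [hvan, h2, pow_succ]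
      ring
    rw [hA]
    have h3 : P k 0 j = 1 := rfl
    simp only [h3, pow_zero, one_mul, map_one, Nat.sub_zero]
    ring

open LaurentPolynomial

lemma collect (a b c c' e : ℚ) (m n p : ℤ) :
    (C a * T m) * (C b * T n * (C c * (C c' * T p)) * C e) = C (a*b*(c*c')*e) * T (m+n+p) := by
  simp only [T_add, map_mul]
  ring

lemma alpha_repr (N k : ℕ) :
    alphaL N k = ∑ j ∈ Finset.range (k+1), ∑ w ∈ Finset.range (j+1),
      C ((-1:ℚ)^k * ((k.choose j : ℚ) * (-1)^j) * ((-1:ℚ)^w * P j w 1 * (N:ℚ)^(j-w)) *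
          ∏ i ∈ Finset.range (k-j), ((N:ℚ) - j - i)) * T ((k:ℤ) - w) := by
  unfold alphaL
  rw [Finset.mul_sum]
  refine Finset.sum_congr rfl fun j hj => ?_
  simp only [Finset.mem_range] at hj
  have hprod : ∏ i ∈ Finset.range j, (C (N:ℚ) * T 1 - C (i:ℚ)) =
      ∑ w ∈ Finset.range (j+1), C ((-1:ℚ)^w * P j w 1) * (C (N:ℚ) * T 1)^(j-w) := by
    conv_lhs => rw [Finset.range_eq_Ico]
    rw [prodP (C : ℚ →+* LaurentPolynomial ℚ) j j 0 (by omega)]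
    refine Finset.sum_congr rfl fun w _ => ?_
    rw [P_zero, map_mul]
  rw [hprod, Finset.mul_sum, Finset.sum_mul, Finset.mul_sum]
  refine Finset.sum_congr rfl fun w hw => ?_
  simp only [Finset.mem_range] at hw
  have hk : (-T 1 : LaurentPolynomial ℚ)^k = C ((-1:ℚ)^k) * T (k:ℤ) := by
    rw [neg_pow, T_pow, mul_one, map_pow, map_neg, map_one]
  have hNT : (C (N:ℚ) * T 1)^(j-w) = C ((N:ℚ)^(j-w)) * T ((j-w : ℕ) : ℤ) := by
    rw [mul_pow, T_pow, mul_one, map_pow]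
  rw [hk, hNT, collect]
  have hT : (k:ℤ) + -(j:ℤ) + ((j-w:ℕ):ℤ) = (k:ℤ) - (w:ℤ) := by
    have : ((j-w:ℕ):ℤ) = (j:ℤ) - w := by omega
    omega
  rw [hT]

lemma P_one_vanish (j v : ℕ) (h : j < v) : P j v 1 = 0 := by
  rcases j with _ | j
  · rcases v with _ | v
    · omega
    · simp [P]
  · exact P_vanish (j+1) v 1 (by omega) (by omega) (by omega)

lemma eval2 (s : Finset ℕ) (t : ℕ → Finset ℕ) (e : ℕ → ℕ → ℤ) (g : ℕ → ℕ → ℚ) (a : ℤ) :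
    (∑ j ∈ s, ∑ w ∈ t j, (Finsupp.single (e j w) (g j w) : ℤ →₀ ℚ)) a
      = ∑ j ∈ s, ∑ w ∈ t j, if e j w = a then g j w else 0 := by
  rw [Finsupp.finset_sum_apply]
  refine Finset.sum_congr rfl fun j _ => ?_
  rw [Finsupp.finset_sum_apply]
  refine Finset.sum_congr rfl fun w _ => ?_
  exact Finsupp.single_apply

/-- Fix integers `N ≥ 1` and `k ≥ 0`, and regard `α_{N,k}(f)` as a
Laurent polynomial in `f` over `ℚ`.  Then for every integer `v` with `0 ≤ v ≤ k`, the
coefficient of `f^{k−v}` in `α_{N,k}(f)` equals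
`(−1)^k Σ_{m=v}^{k+v} (Σ_{j=0}^{k} C(k,j) (−1)^{j+m} P_{j,v}(1) P_{k,m−v}(j)) N^{k−m}`. -/
theorem alpha_coeff (N k : ℕ) (hN : 1 ≤ N) (v : ℕ) (hv : v ≤ k) :
    (alphaL N k).coeff ((k : ℤ) - (v : ℤ)) =
      (-1 : ℚ) ^ k *
        ∑ m ∈ Finset.Icc v (k + v),
          (∑ j ∈ Finset.range (k + 1),
              (Nat.choose k j : ℚ) * (-1 : ℚ) ^ (j + m) * P j v 1 * P k (m - v) j) *
            (N : ℚ) ^ ((k : ℤ) - (m : ℤ)) := by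
  rw [alpha_repr]
  simp only [← LaurentPolynomial.single_eq_C_mul_T]
  simp only [AddMonoidAlgebra.coeff_sum, AddMonoidAlgebra.coeff_single]
  rw [eval2]
  simp only [sub_right_inj, Nat.cast_inj]
  -- LHS : ∑ j, ∑ w ∈ range (j+1), if w = v then coef j w else 0
  simp only [Finset.sum_ite_eq' (ι := ℕ)]
  -- RHS reindex
  rw [← Finset.Ico_add_one_right_eq_Icc, Finset.sum_Ico_eq_sum_range]
  have hrange : k + v + 1 - v = k + 1 := by omega
  rw [hrange, Finset.mul_sum]
  simp only [Nat.add_sub_cancel_left, Finset.sum_mul, Finset.mul_sum]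
  rw [Finset.sum_comm]
  refine Finset.sum_congr rfl fun j hj => ?_
  simp only [Finset.mem_range] at hj
  by_cases hvj : v ≤ j
  · rw [if_pos (Finset.mem_range.mpr (by omega))]
    have hconst : ∏ i ∈ Finset.range (k-j), ((N:ℚ) - j - i) =
        ∑ m ∈ Finset.range (k-j+1), ((-1:ℚ)^m * P k m j) * (N:ℚ)^(k-j-m) := by
      have h1 := prodP (RingHom.id ℚ) k (k-j) j (by omega) (N:ℚ)
      simp only [RingHom.id_apply] at h1
      rw [← h1, Finset.prod_Ico_eq_prod_range]
      refine Finset.prod_congr rfl fun i _ => ?_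
      push_cast
      ring
    rw [hconst, Finset.mul_sum]
    rw [← Finset.sum_subset (Finset.range_subset_range.mpr (show k-j+1 ≤ k+1 by omega))
      (fun i _ hi => ?_)]
    · refine Finset.sum_congr rfl fun m hm => ?_
      simp only [Finset.mem_range] at hm
      have hz : (N:ℚ)^((k:ℤ)-((v:ℕ)+m : ℕ)) = (N:ℚ)^((j-v)+(k-j-m)) := by
        rw [← zpow_natCast]
        congr 1
        omega
      rw [hz, pow_add]
      ring
    · simp only [Finset.mem_range] at hi
      rw [P_vanish k i j (by omega) (by omega) (by omega)]
      ring
  · rw [if_neg (by simp only [Finset.mem_range]; omega)]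
    symm
    apply Finset.sum_eq_zero
    intro i _
    rw [P_one_vanish j v (by omega)]
    ring
end

section
/- Let k ≥ 2 be an even integer and let v be an integer with 0 ≤ v ≤ k. For N ≥ k set c_{N,k,v} = (coefficient of f^{k−v} in α_{N,k}(f)) / (N)_k. Then lim_{N→∞} N^{k/2} c_{N,k,v} = (−1)^v C(k/2, v) · k!/(2^{k/2} (k/2)!) when 0 ≤ v ≤ k/2, and lim_{N→∞} N^{k/2} c_{N,k,v} = 0 when k/2 < v ≤ k. (Here k!/(2^{k/2}(k/2)!) = E Z^k, the k-th moment of a standard normal random variable.) -/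
open Filter

/-- `c_{N,k,v}` is the coefficient of `f^{k−v}` in `α_{N,k}(f)` divided by the falling
factorial `(N)_k = N(N−1)⋯(N−k+1)`. -/
noncomputable def c (N k v : ℕ) : ℚ :=
  (alphaL N k).coeff ((k : ℤ) - (v : ℤ)) / (Nat.descFactorial N k : ℚ)

namespace Stmt18

open Polynomial Finset Nat

/-! ### Elementary symmetric data via coefficients of products of linear factors -/

/-- `elo j t = (∏_{i<j} (X - i)).coeff (j - t)`, i.e. `(-1)^t e_t{0,…,j-1}`, with a guard. -/
noncomputable def elo (j t : ℕ) : ℚ :=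
  if t ≤ j then (∏ i ∈ range j, (X - Polynomial.C (i : ℚ))).coeff (j - t) else 0

/-- `ehi k j t = (∏_{i∈[j,k)} (X - i)).coeff (k - j - t)`, with a guard. -/
noncomputable def ehi (k j t : ℕ) : ℚ :=
  if t + j ≤ k then (∏ i ∈ Finset.Ico j k, (X - Polynomial.C (i : ℚ))).coeff (k - j - t) else 0

lemma prodlin_monic (s : Finset ℕ) : (∏ i ∈ s, (X - Polynomial.C (i : ℚ))).Monic :=
  monic_prod_of_monic _ _ fun i _ => monic_X_sub_C _

lemma prodlin_natDegree (s : Finset ℕ) :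
    (∏ i ∈ s, (X - Polynomial.C (i : ℚ))).natDegree = s.card := by
  rw [natDegree_prod _ _ (fun (i : ℕ) (_ : i ∈ s) => (monic_X_sub_C ((i : ℚ))).ne_zero)]
  calc ∑ i ∈ s, (X - Polynomial.C (i : ℚ)).natDegree = ∑ i ∈ s, 1 :=
        Finset.sum_congr rfl fun i _ => natDegree_X_sub_C _
    _ = s.card := by simp

lemma prodlin_coeff_card (s : Finset ℕ) :
    (∏ i ∈ s, (X - Polynomial.C (i : ℚ))).coeff s.card = 1 := by
  have h := (prodlin_monic s).coeff_natDegree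
  rwa [prodlin_natDegree] at h

lemma prodlin_coeff_zero {s : Finset ℕ} (hs : 0 ∈ s) :
    (∏ i ∈ s, (X - Polynomial.C (i : ℚ))).coeff 0 = 0 := by
  rw [coeff_zero_eq_eval_zero, eval_prod]
  refine Finset.prod_eq_zero hs ?_
  simp

lemma elo_zero (j : ℕ) : elo j 0 = 1 := by
  rw [elo, if_pos (Nat.zero_le _), Nat.sub_zero]
  have := prodlin_coeff_card (range j)
  rwa [card_range] at this

lemma elo_of_lt {j t : ℕ} (h : j < t) : elo j t = 0 := by
  rw [elo, if_neg (by omega)]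

lemma ehi_zero (k j : ℕ) (h : j ≤ k) : ehi k j 0 = 1 := by
  rw [ehi, if_pos (by omega), Nat.sub_zero]
  have := prodlin_coeff_card (Finset.Ico j k)
  rwa [Nat.card_Ico] at this

lemma ehi_top (k t : ℕ) (ht : 1 ≤ t) : ehi k k t = 0 := by
  rw [ehi, if_neg (by omega)]

lemma coeff_prod_mul_X_sub_C (p : ℚ[X]) (a : ℚ) (m : ℕ) :
    (p * (X - Polynomial.C a)).coeff m
      = (p * X).coeff m - a * p.coeff m := by
  have h : p * (X - Polynomial.C a) = p * X - Polynomial.C a * p := by ring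
  rw [h, coeff_sub, coeff_C_mul]

lemma elo_succ (j t : ℕ) (ht : 1 ≤ t) :
    elo (j + 1) t = elo j t - (j : ℚ) * elo j (t - 1) := by
  rcases le_or_gt t j with hle | hlt
  · rw [elo, elo, elo, if_pos (by omega), if_pos hle, if_pos (by omega),
      prod_range_succ, coeff_prod_mul_X_sub_C,
      show j + 1 - t = (j - t) + 1 by omega, coeff_mul_X,
      show j - (t - 1) = (j - t) + 1 by omega]
  · rcases eq_or_lt_of_le (Nat.succ_le_of_lt hlt) with heq | hlt2
    · -- t = j + 1
      have h1 : elo (j + 1) t = 0 := by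
        rw [elo, if_pos (by omega), show j + 1 - t = 0 by omega]
        exact prodlin_coeff_zero (by simp only [Finset.mem_range]; omega)
      have h2 : elo j t = 0 := elo_of_lt hlt
      rw [h1, h2]
      rcases Nat.eq_zero_or_pos j with hj | hj
      · subst hj; simp
      · have h3 : elo j (t - 1) = 0 := by
          rw [elo, if_pos (by omega), show j - (t-1) = 0 by omega]
          exact prodlin_coeff_zero (by simp only [Finset.mem_range]; omega)
        rw [h3]; ring
    · -- t > j + 1
      rw [elo_of_lt (by omega), elo_of_lt hlt, elo_of_lt (by omega)]
      ring

lemma ehi_succ (k j t : ℕ) (hj : j < k) (ht : 1 ≤ t) :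
    ehi k j t = ehi k (j + 1) t - (j : ℚ) * ehi k (j + 1) (t - 1) := by
  have hsplit : (∏ i ∈ Finset.Ico j k, (X - Polynomial.C (i : ℚ)))
      = (∏ i ∈ Finset.Ico (j+1) k, (X - Polynomial.C (i : ℚ))) * (X - Polynomial.C (j : ℚ)) := by
    rw [Finset.prod_eq_prod_Ico_succ_bot hj]
    ring
  rcases le_or_gt (t + (j + 1)) k with hA | hB
  · -- main case
    rw [ehi, ehi, ehi, if_pos (by omega), if_pos (by omega), if_pos (by omega),
      hsplit, coeff_prod_mul_X_sub_C,
      show k - j - t = (k - (j+1) - t) + 1 by omega, coeff_mul_X,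
      show k - (j + 1) - (t - 1) = (k - (j+1) - t) + 1 by omega]
  · rcases le_or_gt (t + j) k with hC | hD
    · -- t + j = k
      have htj : t + j = k := by omega
      rw [ehi, ehi, ehi, if_pos (by omega), if_neg (by omega), if_pos (by omega),
        hsplit, show k - j - t = 0 by omega, coeff_prod_mul_X_sub_C,
        show k - (j+1) - (t-1) = 0 by omega]
      rw [mul_coeff_zero, coeff_X_zero, mul_zero]
    · -- t + j > k
      rw [ehi, ehi, ehi, if_neg (by omega), if_neg (by omega), if_neg (by omega)]
      ring

/-! ### Discrete antidifferences -/

lemma exists_antidiff : ∀ (d : ℕ) (q : ℚ[X]), q.natDegree ≤ d →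
    ∃ p : ℚ[X], (∀ x : ℚ, p.eval (x + 1) - p.eval x = q.eval x) ∧ p.eval 0 = 0 ∧
      p.natDegree ≤ d + 1 ∧ p.coeff (d + 1) = q.coeff d / ((d : ℚ) + 1) := by
  intro d
  induction d with
  | zero =>
    intro q hq
    obtain ⟨a, rfl⟩ : ∃ a, q = Polynomial.C a := ⟨q.coeff 0, eq_C_of_natDegree_le_zero hq⟩
    refine ⟨Polynomial.C a * X, ?_, by simp, ?_, ?_⟩
    · intro x
      simp only [eval_mul, eval_C, eval_X]
      ring
    · exact le_trans (natDegree_C_mul_le _ _) (by simp)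
    · simp
  | succ d ih =>
    intro q hq
    set cQ : ℚ := q.coeff (d + 1) with hcQ
    have hd2 : ((d : ℚ) + 2) ≠ 0 := by positivity
    set g : ℚ[X] := (X + 1) ^ (d + 2) - X ^ (d + 2) with hg
    have hgc : ∀ m : ℕ, g.coeff m
        = ((d + 2).choose m : ℚ) - if m = d + 2 then 1 else 0 := by
      intro m
      rw [hg, coeff_sub, coeff_X_add_one_pow, coeff_X_pow]
    set q' : ℚ[X] := q - Polynomial.C (cQ / ((d : ℚ) + 2)) * g with hq'
    have hq'deg : q'.natDegree ≤ d := by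
      rw [natDegree_le_iff_coeff_eq_zero]
      intro m hm
      rw [hq', coeff_sub, coeff_C_mul, hgc]
      rcases eq_or_lt_of_le (show d + 1 ≤ m by omega) with hm1 | hm2
      · have hch : (d + 2).choose (d + 1) = d + 2 := Nat.choose_succ_self_right (d + 1)
        rw [← hm1, if_neg (by omega), hch, ← hcQ]
        push_cast
        field_simp
        ring
      · have hq0 : q.coeff m = 0 := coeff_eq_zero_of_natDegree_lt (by omega)
        rcases eq_or_lt_of_le (show d + 2 ≤ m by omega) with hm3 | hm4
        · rw [hq0, ← hm3, if_pos rfl, Nat.choose_self]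
          push_cast; ring
        · rw [hq0, if_neg (by omega), Nat.choose_eq_zero_of_lt (by omega)]
          push_cast; ring
    obtain ⟨p₂, hp₂Δ, hp₂0, hp₂deg, _⟩ := ih q' hq'deg
    refine ⟨Polynomial.C (cQ / ((d : ℚ) + 2)) * X ^ (d + 2) + p₂, ?_, ?_, ?_, ?_⟩
    · intro x
      have h2 := hp₂Δ x
      rw [hq'] at h2
      simp only [eval_sub, eval_mul, eval_C, eval_add, eval_pow, eval_X, eval_one, hg] at h2
      simp only [eval_add, eval_mul, eval_C, eval_pow, eval_X]
      linear_combination h2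
    · simp [hp₂0]
    · refine le_trans (natDegree_add_le _ _) (max_le ?_ (by omega))
      exact le_trans (natDegree_C_mul_le _ _) (by simp)
    · rw [coeff_add, coeff_C_mul, coeff_X_pow, if_pos rfl,
        coeff_eq_zero_of_natDegree_lt (by omega : p₂.natDegree < d + 1 + 1)]
      push_cast
      ring

/-- A chosen antidifference. -/
noncomputable def AD (q : ℚ[X]) : ℚ[X] := (exists_antidiff q.natDegree q le_rfl).choose

lemma AD_delta (q : ℚ[X]) (x : ℚ) : (AD q).eval (x + 1) - (AD q).eval x = q.eval x :=
  (exists_antidiff q.natDegree q le_rfl).choose_spec.1 x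

lemma AD_zero (q : ℚ[X]) : (AD q).eval 0 = 0 :=
  (exists_antidiff q.natDegree q le_rfl).choose_spec.2.1

lemma AD_deg (q : ℚ[X]) : (AD q).natDegree ≤ q.natDegree + 1 :=
  (exists_antidiff q.natDegree q le_rfl).choose_spec.2.2.1

lemma AD_coeff (q : ℚ[X]) :
    (AD q).coeff (q.natDegree + 1) = q.coeff q.natDegree / ((q.natDegree : ℚ) + 1) :=
  (exists_antidiff q.natDegree q le_rfl).choose_spec.2.2.2

/-! ### The polynomial families `A` and `B` -/

noncomputable def A : ℕ → ℚ[X]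
  | 0 => 1
  | v + 1 => AD (-(X * A v))

noncomputable def B (k : ℕ) : ℕ → ℚ[X]
  | 0 => 1
  | r + 1 => AD (X * ((B k r).comp (X + 1)))
      - Polynomial.C ((AD (X * ((B k r).comp (X + 1)))).eval (k : ℚ))

lemma A_facts (v : ℕ) : (A v).natDegree ≤ 2 * v ∧
    (A v).coeff (2 * v) = (-1 : ℚ) ^ v / (2 ^ v * (v ! : ℚ)) ∧
    ∀ j : ℕ, (A v).eval (j : ℚ) = elo j v := by
  induction v with
  | zero =>
    refine ⟨by simp [A], by simp [A], fun j => ?_⟩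
    rw [show A 0 = 1 from rfl, elo_zero]
    simp
  | succ v ih =>
    obtain ⟨hdeg, hcoeff, heval⟩ := ih
    have hval_ne : (-1 : ℚ) ^ v / (2 ^ v * (v ! : ℚ)) ≠ 0 := by
      apply div_ne_zero
      · exact pow_ne_zero _ (by norm_num)
      · positivity
    have hAne : A v ≠ 0 := by
      intro h0
      rw [h0, coeff_zero] at hcoeff
      exact hval_ne hcoeff.symm
    have hdeg' : (A v).natDegree = 2 * v :=
      le_antisymm hdeg (le_natDegree_of_ne_zero (by rw [hcoeff]; exact hval_ne))
    set q : ℚ[X] := -(X * A v) with hqdef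
    have hqdeg : q.natDegree = 2 * v + 1 := by
      rw [hqdef, natDegree_neg, natDegree_X_mul hAne, hdeg']
    have hqcoeff : q.coeff (2 * v + 1) = -((-1 : ℚ) ^ v / (2 ^ v * (v ! : ℚ))) := by
      rw [hqdef, coeff_neg, coeff_X_mul, hcoeff]
    have hA1 : A (v + 1) = AD q := rfl
    refine ⟨?_, ?_, ?_⟩
    · rw [hA1]
      have := AD_deg q
      omega
    · rw [hA1, show 2 * (v + 1) = q.natDegree + 1 by omega, AD_coeff, hqdeg, hqcoeff]
      rw [pow_succ, pow_succ, Nat.factorial_succ]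
      push_cast
      have hv1 : ((v : ℚ) + 1) ≠ 0 := by positivity
      have hfv : ((v ! : ℚ)) ≠ 0 := by positivity
      field_simp
      ring
    · intro j
      induction j with
      | zero =>
        rw [hA1, Nat.cast_zero, AD_zero, elo_of_lt (by omega)]
      | succ j ihj =>
        have hΔ := AD_delta q (j : ℚ)
        have hqe : q.eval (j : ℚ) = -((j : ℚ) * elo j v) := by
          rw [hqdef]
          simp only [eval_neg, eval_mul, eval_X, heval j]
        rw [hA1] at ihj ⊢
        push_cast
        rw [elo_succ j (v + 1) (by omega), show v + 1 - 1 = v by omega]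
        linear_combination hΔ + ihj + hqe

lemma B_facts (k r : ℕ) : (B k r).natDegree ≤ 2 * r ∧
    (B k r).coeff (2 * r) = 1 / (2 ^ r * (r ! : ℚ)) ∧
    ∀ j : ℕ, j ≤ k → (B k r).eval (j : ℚ) = ehi k j r := by
  induction r with
  | zero =>
    refine ⟨by simp [B], by simp [B], fun j hj => ?_⟩
    rw [show B k 0 = 1 from rfl, ehi_zero k j hj]
    simp
  | succ r ih =>
    obtain ⟨hdeg, hcoeff, heval⟩ := ih
    have hval_ne : (1 : ℚ) / (2 ^ r * (r ! : ℚ)) ≠ 0 := by positivity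
    have hBne : B k r ≠ 0 := by
      intro h0
      rw [h0, coeff_zero] at hcoeff
      exact hval_ne hcoeff.symm
    have hdeg' : (B k r).natDegree = 2 * r :=
      le_antisymm hdeg (le_natDegree_of_ne_zero (by rw [hcoeff]; exact hval_ne))
    set cp : ℚ[X] := (B k r).comp (X + 1) with hcpdef
    have hX1deg : (X + 1 : ℚ[X]).natDegree = 1 := by
      rw [show (X + 1 : ℚ[X]) = X + Polynomial.C 1 by simp, natDegree_X_add_C]
    have hcpdeg : cp.natDegree = 2 * r := by
      rw [hcpdef, natDegree_comp, hX1deg, hdeg', mul_one]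
    have hcplead : cp.coeff (2 * r) = 1 / (2 ^ r * (r ! : ℚ)) := by
      have h1 : cp.coeff (2 * r) = cp.leadingCoeff := by
        rw [show cp.leadingCoeff = cp.coeff cp.natDegree from rfl, hcpdeg]
      rw [h1, hcpdef, leadingCoeff_comp (by rw [hX1deg]; omega)]
      have h2 : (X + 1 : ℚ[X]).leadingCoeff = 1 := by
        rw [show (X + 1 : ℚ[X]) = X + Polynomial.C 1 by simp]
        exact monic_X_add_C 1
      rw [h2, one_pow, mul_one,
        show (B k r).leadingCoeff = (B k r).coeff ((B k r).natDegree) from rfl, hdeg', hcoeff]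
    have hcpne : cp ≠ 0 := by
      intro h0
      rw [h0, coeff_zero] at hcplead
      exact hval_ne hcplead.symm
    set q : ℚ[X] := X * cp with hqdef
    have hqdeg : q.natDegree = 2 * r + 1 := by
      rw [hqdef, natDegree_X_mul hcpne, hcpdeg]
    have hqcoeff : q.coeff (2 * r + 1) = 1 / (2 ^ r * (r ! : ℚ)) := by
      rw [hqdef, coeff_X_mul, hcplead]
    have hB1 : B k (r + 1) = AD q - Polynomial.C ((AD q).eval (k : ℚ)) := rfl
    refine ⟨?_, ?_, ?_⟩
    · rw [hB1]
      refine le_trans (natDegree_sub_le _ _) (max_le ?_ (by simp))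
      have := AD_deg q
      omega
    · rw [hB1, coeff_sub, coeff_C, if_neg (by omega),
        show 2 * (r + 1) = q.natDegree + 1 by omega, AD_coeff, hqdeg, hqcoeff]
      rw [pow_succ, Nat.factorial_succ]
      push_cast
      have hv1 : ((r : ℚ) + 1) ≠ 0 := by positivity
      have hfv : ((r ! : ℚ)) ≠ 0 := by positivity
      field_simp
      ring
    · have key : ∀ i : ℕ, ∀ j : ℕ, j + i = k → (B k (r + 1)).eval (j : ℚ) = ehi k j (r + 1) := by
        intro i
        induction i with
        | zero =>
          intro j hj
          have hjk : j = k := by omega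
          rw [hjk, hB1, eval_sub, eval_C, sub_self, ehi_top k (r + 1) (by omega)]
        | succ i ihi =>
          intro j hj
          have hΔ := AD_delta q (j : ℚ)
          have hqe : q.eval (j : ℚ) = (j : ℚ) * ehi k (j + 1) r := by
            rw [hqdef]
            simp only [eval_mul, eval_X, hcpdef, eval_comp, eval_add, eval_one]
            rw [show ((j : ℚ) + 1) = ((j + 1 : ℕ) : ℚ) by push_cast; ring,
              heval (j + 1) (by omega)]
          have hnext := ihi (j + 1) (by omega)
          rw [hB1] at hnext ⊢
          rw [ehi_succ k j (r + 1) (by omega) (by omega), show r + 1 - 1 = r by omega]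
          push_cast at hnext
          simp only [eval_sub, eval_C] at hnext ⊢
          linear_combination -hΔ + hnext - hqe
      intro j hj
      exact key (k - j) j (by omega)

/-! ### Alternating binomial sums against polynomials -/

lemma eval_binpoly (j t : ℕ) :
    (∏ i ∈ range t, (X - Polynomial.C (i : ℚ))).eval (j : ℚ) = (j.descFactorial t : ℚ) := by
  rw [eval_prod]
  rcases le_or_gt t j with hle | hlt
  · rw [Nat.descFactorial_eq_prod_range, Nat.cast_prod]
    refine Finset.prod_congr rfl fun i hi => ?_
    rw [eval_sub, eval_X, eval_C, Nat.cast_sub (by simp at hi; omega)]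
  · rw [Nat.descFactorial_eq_zero_iff_lt.mpr hlt, Nat.cast_zero]
    refine Finset.prod_eq_zero (Finset.mem_range.mpr hlt) ?_
    simp

lemma alt_sum_choose (n : ℕ) :
    ∑ i ∈ range (n + 1), (-1 : ℚ) ^ i * (n.choose i : ℚ) = if n = 0 then 1 else 0 := by
  by_cases h0 : n = 0
  · subst h0; simp
  · rw [if_neg h0]
    have h := Int.alternating_sum_range_choose_of_ne h0
    exact_mod_cast h

lemma sum_choose_desc (k t : ℕ) (ht : t ≤ k) :
    ∑ j ∈ range (k + 1), (-1 : ℚ) ^ j * (k.choose j : ℚ) * (j.descFactorial t : ℚ)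
      = if t = k then (-1 : ℚ) ^ k * (k ! : ℚ) else 0 := by
  have step1 : ∑ j ∈ range (k + 1), (-1 : ℚ) ^ j * (k.choose j : ℚ) * (j.descFactorial t : ℚ)
      = ∑ j ∈ Finset.Ico t (k + 1),
          (-1 : ℚ) ^ j * (k.choose j : ℚ) * (j.descFactorial t : ℚ) := by
    refine (Finset.sum_subset (by intro x hx; simp at hx ⊢; omega) ?_).symm
    intro x hx hnx
    simp only [Finset.mem_range] at hx
    simp only [Finset.mem_Ico] at hnx
    have hxt : x < t := by omega
    rw [Nat.descFactorial_eq_zero_iff_lt.mpr hxt]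
    push_cast; ring
  rw [step1, Finset.sum_Ico_eq_sum_range]
  have step2 : ∀ i ∈ range (k + 1 - t),
      (-1 : ℚ) ^ (t + i) * (k.choose (t + i) : ℚ) * ((t + i).descFactorial t : ℚ)
        = ((-1 : ℚ) ^ t * (t ! : ℚ) * (k.choose t : ℚ)) * ((-1 : ℚ) ^ i * ((k - t).choose i : ℚ)) := by
    intro i hi
    simp only [Finset.mem_range] at hi
    have hchoose : k.choose (t + i) * (t + i).choose t = k.choose t * (k - t).choose i := by
      have h := Nat.choose_mul (n := k) (show t ≤ t + i by omega)
      rwa [Nat.add_sub_cancel_left] at h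
    have hdesc : ((t + i).descFactorial t : ℚ) = (t ! : ℚ) * ((t + i).choose t : ℚ) := by
      exact_mod_cast congrArg (Nat.cast : ℕ → ℚ) (Nat.descFactorial_eq_factorial_mul_choose _ _)
    have hch : (k.choose (t + i) : ℚ) * ((t + i).choose t : ℚ)
        = (k.choose t : ℚ) * ((k - t).choose i : ℚ) := by exact_mod_cast hchoose
    rw [hdesc, pow_add]
    calc (-1 : ℚ) ^ t * (-1 : ℚ) ^ i * (k.choose (t + i) : ℚ)
          * ((t ! : ℚ) * ((t + i).choose t : ℚ))
        = (-1 : ℚ) ^ t * (-1 : ℚ) ^ i * (t ! : ℚ)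
            * ((k.choose (t + i) : ℚ) * ((t + i).choose t : ℚ)) := by ring
      _ = (-1 : ℚ) ^ t * (-1 : ℚ) ^ i * (t ! : ℚ)
            * ((k.choose t : ℚ) * ((k - t).choose i : ℚ)) := by rw [hch]
      _ = ((-1 : ℚ) ^ t * (t ! : ℚ) * (k.choose t : ℚ))
            * ((-1 : ℚ) ^ i * ((k - t).choose i : ℚ)) := by ring
  rw [Finset.sum_congr rfl step2, ← Finset.mul_sum,
    show k + 1 - t = (k - t) + 1 by omega, alt_sum_choose]
  rcases eq_or_lt_of_le ht with hteq | htlt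
  · subst hteq
    rw [Nat.sub_self, if_pos rfl, if_pos rfl, Nat.choose_self]
    push_cast; ring
  · rw [if_neg (by omega), if_neg (by omega)]
    ring

lemma sum_alt (k : ℕ) : ∀ (d : ℕ) (p : ℚ[X]), p.natDegree ≤ d → d ≤ k →
    ∑ j ∈ range (k + 1), (-1 : ℚ) ^ j * (k.choose j : ℚ) * p.eval (j : ℚ)
      = (-1 : ℚ) ^ k * (k ! : ℚ) * p.coeff k := by
  intro d
  induction d with
  | zero =>
    intro p hp _
    rw [eq_C_of_natDegree_le_zero hp]
    simp only [eval_C, coeff_C]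
    have hstep : ∑ j ∈ range (k + 1), (-1 : ℚ) ^ j * (k.choose j : ℚ) * p.coeff 0
        = (∑ j ∈ range (k + 1), (-1 : ℚ) ^ j * (k.choose j : ℚ)) * p.coeff 0 := by
      rw [Finset.sum_mul]
    rw [hstep, alt_sum_choose]
    rcases Nat.eq_zero_or_pos k with hk | hk
    · subst hk; norm_num
    · rw [if_neg (by omega), if_neg (by omega)]
      ring
  | succ d ihd =>
    intro p hp hdk
    set cc : ℚ := p.coeff (d + 1) with hcc
    set bp : ℚ[X] := ∏ i ∈ range (d + 1), (X - Polynomial.C (i : ℚ)) with hbp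
    have hbpdeg : bp.natDegree = d + 1 := by rw [hbp, prodlin_natDegree, card_range]
    have hbptop : bp.coeff (d + 1) = 1 := by
      have := prodlin_coeff_card (range (d + 1))
      rwa [card_range] at this
    set q : ℚ[X] := p - Polynomial.C cc * bp with hq
    have hqdeg : q.natDegree ≤ d := by
      rw [natDegree_le_iff_coeff_eq_zero]
      intro m hm
      rw [hq, coeff_sub, coeff_C_mul]
      rcases eq_or_lt_of_le (show d + 1 ≤ m by omega) with hm1 | hm2
      · rw [← hm1, hbptop, ← hcc]; ring
      · rw [coeff_eq_zero_of_natDegree_lt (by omega : p.natDegree < m),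
          coeff_eq_zero_of_natDegree_lt (by omega : bp.natDegree < m)]
        ring
    have hsplit : ∀ j : ℕ, p.eval (j : ℚ) = q.eval (j : ℚ) + cc * bp.eval (j : ℚ) := by
      intro j
      rw [hq]
      simp only [eval_sub, eval_mul, eval_C]
      ring
    calc ∑ j ∈ range (k + 1), (-1 : ℚ) ^ j * (k.choose j : ℚ) * p.eval (j : ℚ)
        = (∑ j ∈ range (k + 1), (-1 : ℚ) ^ j * (k.choose j : ℚ) * q.eval (j : ℚ))
          + cc * ∑ j ∈ range (k + 1),
              (-1 : ℚ) ^ j * (k.choose j : ℚ) * (j.descFactorial (d + 1) : ℚ) := by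
          rw [Finset.mul_sum, ← Finset.sum_add_distrib]
          refine Finset.sum_congr rfl fun j hj => ?_
          rw [hsplit j, ← eval_binpoly j (d + 1), ← hbp]
          ring
      _ = (-1 : ℚ) ^ k * (k ! : ℚ) * q.coeff k
          + cc * (if d + 1 = k then (-1 : ℚ) ^ k * (k ! : ℚ) else 0) := by
          rw [ihd q hqdeg (by omega), sum_choose_desc k (d + 1) hdk]
      _ = (-1 : ℚ) ^ k * (k ! : ℚ) * p.coeff k := by
          rw [hq, coeff_sub, coeff_C_mul]
          by_cases hdk1 : d + 1 = k
          · rw [if_pos hdk1, ← hdk1, hbptop]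
            ring
          · rw [if_neg hdk1,
              coeff_eq_zero_of_natDegree_lt (show bp.natDegree < k by omega)]
            ring

/-! ### From `alphaL` to an honest polynomial -/

lemma toLaurent_coeff (p : ℚ[X]) (m : ℕ) : (Polynomial.toLaurent p).coeff ((m : ℕ) : ℤ) = p.coeff m := by
  rw [LaurentPolynomial.coeff_toLaurent]
  exact Finsupp.mapDomain_apply Nat.castEmbedding.injective _ m

/-- The polynomial (in the indeterminate `f`) whose `toLaurent` is `alphaL N k`. -/
noncomputable def Qpoly (N k : ℕ) : ℚ[X] :=
  ∑ j ∈ range (k + 1),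
    Polynomial.C ((-1 : ℚ) ^ (k + j) * (k.choose j : ℚ)
        * ∏ i ∈ range (k - j), ((N : ℚ) - (j : ℚ) - (i : ℚ)))
      * X ^ (k - j) * ∏ i ∈ range j, (Polynomial.C (N : ℚ) * X - Polynomial.C (i : ℚ))

open LaurentPolynomial in
lemma alphaL_eq (N k : ℕ) : alphaL N k = Polynomial.toLaurent (Qpoly N k) := by
  rw [alphaL, Qpoly, Finset.mul_sum, map_sum]
  refine Finset.sum_congr rfl fun j hj => ?_
  simp only [Finset.mem_range] at hj
  have hjk : j ≤ k := by omega
  have hq : Polynomial.toLaurent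
        (∏ i ∈ range j, (Polynomial.C (N : ℚ) * X - Polynomial.C (i : ℚ)))
      = ∏ i ∈ range j, (LaurentPolynomial.C (N : ℚ) * T 1 - LaurentPolynomial.C (i : ℚ)) := by
    rw [map_prod]
    refine Finset.prod_congr rfl fun i _ => ?_
    rw [map_sub, map_mul, Polynomial.toLaurent_C, Polynomial.toLaurent_C, Polynomial.toLaurent_X]
  have hT : ((-T 1 : LaurentPolynomial ℚ)) ^ k
      = LaurentPolynomial.C ((-1 : ℚ) ^ k) * T (k : ℤ) := by
    rw [neg_pow, T_pow, mul_one, map_pow, map_neg, map_one]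
  have hTT : (T ((k : ℕ) : ℤ) : LaurentPolynomial ℚ) * T (-(j : ℤ)) = T (((k - j : ℕ) : ℤ)) := by
    rw [← T_add]
    congr 1
    omega
  simp only [pow_add, map_mul, Polynomial.toLaurent_C, Polynomial.toLaurent_X_pow]
  rw [hq, hT, ← hTT]
  ring

lemma coeff_scale (N : ℚ) (j : ℕ) : ∀ m : ℕ,
    (∏ i ∈ range j, (Polynomial.C N * X - Polynomial.C (i : ℚ))).coeff m
      = N ^ m * (∏ i ∈ range j, (X - Polynomial.C (i : ℚ))).coeff m := by
  induction j with
  | zero =>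
    intro m
    rcases Nat.eq_zero_or_pos m with hm | hm
    · subst hm; simp
    · simp only [range_zero, Finset.prod_empty]
      rw [coeff_one, if_neg (by omega : ¬ m = 0)]
      ring
  | succ j ih =>
    intro m
    rw [prod_range_succ, prod_range_succ]
    have h1 : (∏ i ∈ range j, (Polynomial.C N * X - Polynomial.C (i : ℚ)))
          * (Polynomial.C N * X - Polynomial.C (j : ℚ))
        = Polynomial.C N * ((∏ i ∈ range j, (Polynomial.C N * X - Polynomial.C (i : ℚ))) * X)
          - Polynomial.C (j : ℚ) * (∏ i ∈ range j, (Polynomial.C N * X - Polynomial.C (i : ℚ))) := by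
      ring
    have h2 : (∏ i ∈ range j, (X - Polynomial.C (i : ℚ))) * (X - Polynomial.C (j : ℚ))
        = (∏ i ∈ range j, (X - Polynomial.C (i : ℚ))) * X
          - Polynomial.C (j : ℚ) * (∏ i ∈ range j, (X - Polynomial.C (i : ℚ))) := by
      ring
    rw [h1, h2, coeff_sub, coeff_sub, coeff_C_mul, coeff_C_mul, coeff_C_mul]
    rcases Nat.eq_zero_or_pos m with hm | hm
    · subst hm
      rw [mul_coeff_zero, mul_coeff_zero, coeff_X_zero, ih 0]
      ring
    · obtain ⟨m', rfl⟩ : ∃ m', m = m' + 1 := ⟨m - 1, by omega⟩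
      rw [coeff_mul_X, coeff_mul_X, ih m', ih (m' + 1), pow_succ]
      ring

lemma alpha_coeff (N k v : ℕ) (hv : v ≤ k) :
    (alphaL N k).coeff ((k : ℤ) - (v : ℤ))
      = ∑ j ∈ Finset.Ico v (k + 1), (-1 : ℚ) ^ (k + j) * (k.choose j : ℚ) * elo j v
          * (N : ℚ) ^ (j - v) * ∏ i ∈ range (k - j), ((N : ℚ) - (j : ℚ) - (i : ℚ)) := by
  rw [alphaL_eq, show (k : ℤ) - (v : ℤ) = ((k - v : ℕ) : ℤ) by omega, toLaurent_coeff,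
    Qpoly, finset_sum_coeff]
  have step : ∀ j ∈ range (k + 1),
      (Polynomial.C ((-1 : ℚ) ^ (k + j) * (k.choose j : ℚ)
          * ∏ i ∈ range (k - j), ((N : ℚ) - (j : ℚ) - (i : ℚ)))
        * X ^ (k - j)
        * ∏ i ∈ range j, (Polynomial.C (N : ℚ) * X - Polynomial.C (i : ℚ))).coeff (k - v)
      = if v ≤ j then (-1 : ℚ) ^ (k + j) * (k.choose j : ℚ) * elo j v
          * (N : ℚ) ^ (j - v) * ∏ i ∈ range (k - j), ((N : ℚ) - (j : ℚ) - (i : ℚ)) else 0 := by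
    intro j hj
    simp only [Finset.mem_range] at hj
    have hrw : Polynomial.C ((-1 : ℚ) ^ (k + j) * (k.choose j : ℚ)
          * ∏ i ∈ range (k - j), ((N : ℚ) - (j : ℚ) - (i : ℚ)))
          * X ^ (k - j)
          * ∏ i ∈ range j, (Polynomial.C (N : ℚ) * X - Polynomial.C (i : ℚ))
        = Polynomial.C ((-1 : ℚ) ^ (k + j) * (k.choose j : ℚ)
            * ∏ i ∈ range (k - j), ((N : ℚ) - (j : ℚ) - (i : ℚ)))
          * ((∏ i ∈ range j, (Polynomial.C (N : ℚ) * X - Polynomial.C (i : ℚ))) * X ^ (k - j)) := by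
      ring
    rw [hrw, coeff_C_mul, coeff_mul_X_pow']
    by_cases hvj : v ≤ j
    · rw [if_pos (by omega : k - j ≤ k - v), if_pos hvj,
        show k - v - (k - j) = j - v by omega, coeff_scale, elo, if_pos hvj]
      ring
    · rw [if_neg (by omega), if_neg hvj, mul_zero]
  rw [Finset.sum_congr rfl step, Finset.sum_ite, Finset.sum_const_zero, add_zero]
  congr 1
  ext x
  simp only [Finset.mem_filter, Finset.mem_range, Finset.mem_Ico]
  omega

/-! ### The master polynomial `Pp` (in the variable `N`) -/

noncomputable def Pp (k h v : ℕ) : ℚ[X] :=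
  ∑ j ∈ Finset.Ico v (k + 1),
    Polynomial.C ((-1 : ℚ) ^ (k + j) * (k.choose j : ℚ) * elo j v)
      * X ^ (h + (j - v)) * ∏ i ∈ range (k - j), (X - Polynomial.C ((j : ℚ) + (i : ℚ)))

lemma eval_Pp (N k h v : ℕ) (hv : v ≤ k) :
    (Pp k h v).eval (N : ℚ) = (N : ℚ) ^ h * (alphaL N k).coeff ((k : ℤ) - (v : ℤ)) := by
  rw [alpha_coeff N k v hv, Pp, eval_finset_sum, Finset.mul_sum]
  refine Finset.sum_congr rfl fun j hj => ?_
  simp only [Finset.mem_Ico] at hj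
  rw [eval_mul, eval_mul, eval_C, eval_pow, eval_X, eval_prod]
  have hprod : ∀ i ∈ range (k - j),
      (X - Polynomial.C ((j : ℚ) + (i : ℚ))).eval (N : ℚ) = (N : ℚ) - (j : ℚ) - (i : ℚ) := by
    intro i _
    rw [eval_sub, eval_X, eval_C]
    ring
  rw [Finset.prod_congr rfl hprod, pow_add]
  ring

lemma Pp_natDegree_le (k h v : ℕ) (hv : v ≤ k) : (Pp k h v).natDegree ≤ h + k - v := by
  rw [Pp]
  refine natDegree_sum_le_of_forall_le _ _ fun j hj => ?_
  simp only [Finset.mem_Ico] at hj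
  rw [mul_assoc]
  refine le_trans (natDegree_C_mul_le _ _) (le_trans (natDegree_mul_le) ?_)
  have hM : (∏ i ∈ range (k - j), (X - Polynomial.C ((j : ℚ) + (i : ℚ)))).natDegree = k - j := by
    rw [natDegree_prod _ _
      (fun (i : ℕ) (_ : i ∈ range (k - j)) => (monic_X_sub_C ((j : ℚ) + (i : ℚ))).ne_zero)]
    calc ∑ i ∈ range (k - j), (X - Polynomial.C ((j : ℚ) + (i : ℚ))).natDegree
        = ∑ i ∈ range (k - j), 1 := Finset.sum_congr rfl fun i _ => natDegree_X_sub_C _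
      _ = k - j := by simp
  rw [natDegree_X_pow, hM]
  omega

lemma Pp_coeff_core (k h v r m : ℕ) (hk : k = 2 * h) (hvh : v ≤ h) (hr : v + r ≤ h)
    (hm : m = h + k - v - r) :
    (Pp k h v).coeff m = (k ! : ℚ) * ((A v) * (B k r)).coeff k := by
  have hAf := A_facts v
  have hBf := B_facts k r
  rw [Pp, finset_sum_coeff]
  have step : ∀ j ∈ Finset.Ico v (k + 1),
      (Polynomial.C ((-1 : ℚ) ^ (k + j) * (k.choose j : ℚ) * elo j v)
        * X ^ (h + (j - v)) * ∏ i ∈ range (k - j), (X - Polynomial.C ((j : ℚ) + (i : ℚ)))).coeff m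
      = (-1 : ℚ) ^ (k + j) * (k.choose j : ℚ)
          * ((A v).eval (j : ℚ) * (B k r).eval (j : ℚ)) := by
    intro j hj
    simp only [Finset.mem_Ico] at hj
    have hM : (∏ i ∈ range (k - j), (X - Polynomial.C ((j : ℚ) + (i : ℚ))))
        = ∏ i ∈ Finset.Ico j k, (X - Polynomial.C (i : ℚ)) := by
      rw [Finset.prod_Ico_eq_prod_range]
      refine Finset.prod_congr rfl fun i _ => ?_
      push_cast
      ring
    have hrw : Polynomial.C ((-1 : ℚ) ^ (k + j) * (k.choose j : ℚ) * elo j v)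
          * X ^ (h + (j - v)) * ∏ i ∈ range (k - j), (X - Polynomial.C ((j : ℚ) + (i : ℚ)))
        = Polynomial.C ((-1 : ℚ) ^ (k + j) * (k.choose j : ℚ) * elo j v)
          * ((∏ i ∈ Finset.Ico j k, (X - Polynomial.C (i : ℚ))) * X ^ (h + (j - v))) := by
      rw [hM]; ring
    rw [hrw, coeff_C_mul, coeff_mul_X_pow']
    rw [hAf.2.2 j, hBf.2.2 j (by omega)]
    by_cases hcase : r + j ≤ k
    · rw [if_pos (by omega : h + (j - v) ≤ m), show m - (h + (j - v)) = k - j - r by omega,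
        ehi, if_pos hcase]
      ring
    · rw [if_neg (by omega), ehi, if_neg hcase]
      ring
  rw [Finset.sum_congr rfl step]
  rw [Finset.sum_subset (show Finset.Ico v (k + 1) ⊆ range (k + 1) by
      intro x hx; simp only [Finset.mem_Ico] at hx; simp only [Finset.mem_range]; omega)
    (by
      intro x hx hnx
      simp only [Finset.mem_range] at hx
      simp only [Finset.mem_Ico] at hnx
      have hxv : x < v := by omega
      rw [hAf.2.2 x, elo_of_lt hxv]
      ring)]
  have step2 : ∀ j ∈ range (k + 1),
      (-1 : ℚ) ^ (k + j) * (k.choose j : ℚ) * ((A v).eval (j : ℚ) * (B k r).eval (j : ℚ))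
        = (-1 : ℚ) ^ k * ((-1 : ℚ) ^ j * (k.choose j : ℚ) * ((A v * B k r).eval (j : ℚ))) := by
    intro j _
    rw [pow_add, eval_mul]
    ring
  rw [Finset.sum_congr rfl step2, ← Finset.mul_sum,
    sum_alt k k (A v * B k r)
      (le_trans (natDegree_mul_le) (by have := hAf.1; have := hBf.1; omega)) le_rfl]
  have hsq : (-1 : ℚ) ^ k * (-1 : ℚ) ^ k = 1 := by
    rw [← pow_add]
    exact Even.neg_one_pow ⟨k, by omega⟩
  calc (-1 : ℚ) ^ k * ((-1 : ℚ) ^ k * (k ! : ℚ) * (A v * B k r).coeff k)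
      = ((-1 : ℚ) ^ k * (-1 : ℚ) ^ k) * ((k ! : ℚ) * (A v * B k r).coeff k) := by ring
    _ = (k ! : ℚ) * (A v * B k r).coeff k := by rw [hsq, one_mul]

lemma Pp_coeff_gt (k h v m : ℕ) (hk : k = 2 * h) (hv : v ≤ k) (hm : k < m) :
    (Pp k h v).coeff m = 0 := by
  by_cases hvh : v ≤ h
  · by_cases hm2 : h + k - v < m
    · exact coeff_eq_zero_of_natDegree_lt (lt_of_le_of_lt (Pp_natDegree_le k h v hv) hm2)
    · push_neg at hm2
      set r : ℕ := h + k - v - m with hr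
      have hrr : v + r ≤ h := by omega
      rw [Pp_coeff_core k h v r m hk hvh hrr (by omega)]
      have hAf := A_facts v
      have hBf := B_facts k r
      rw [coeff_eq_zero_of_natDegree_lt
        (lt_of_le_of_lt (natDegree_mul_le (p := A v) (q := B k r))
          (by have := hAf.1; have := hBf.1; omega))]
      ring
  · exact coeff_eq_zero_of_natDegree_lt
      (lt_of_le_of_lt (Pp_natDegree_le k h v hv) (by omega))

lemma Pp_coeff_k (k h v : ℕ) (hk : k = 2 * h) (hv : v ≤ k) :
    (Pp k h v).coeff k
      = if v ≤ h then (-1 : ℚ) ^ v * (h.choose v : ℚ) * ((k ! : ℚ) / (2 ^ h * (h ! : ℚ)))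
        else 0 := by
  split_ifs with hvh
  · rw [Pp_coeff_core k h v (h - v) k hk hvh (by omega) (by omega)]
    obtain ⟨hAdeg, hAcoeff, _⟩ := A_facts v
    obtain ⟨hBdeg, hBcoeff, _⟩ := B_facts k (h - v)
    have hAv_ne : (-1 : ℚ) ^ v / (2 ^ v * (v ! : ℚ)) ≠ 0 := by
      apply div_ne_zero
      · exact pow_ne_zero _ (by norm_num)
      · positivity
    have hBv_ne : (1 : ℚ) / (2 ^ (h - v) * ((h - v)! : ℚ)) ≠ 0 := by positivity
    have hAdeg' : (A v).natDegree = 2 * v :=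
      le_antisymm hAdeg (le_natDegree_of_ne_zero (by rw [hAcoeff]; exact hAv_ne))
    have hBdeg' : (B k (h - v)).natDegree = 2 * (h - v) :=
      le_antisymm hBdeg (le_natDegree_of_ne_zero (by rw [hBcoeff]; exact hBv_ne))
    have hlcA : (A v).leadingCoeff = (-1 : ℚ) ^ v / (2 ^ v * (v ! : ℚ)) := by
      rw [show (A v).leadingCoeff = (A v).coeff ((A v).natDegree) from rfl, hAdeg', hAcoeff]
    have hlcB : (B k (h - v)).leadingCoeff = 1 / (2 ^ (h - v) * ((h - v)! : ℚ)) := by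
      rw [show (B k (h - v)).leadingCoeff
        = (B k (h - v)).coeff ((B k (h - v)).natDegree) from rfl, hBdeg', hBcoeff]
    have hco : (A v * B k (h - v)).coeff k
        = ((-1 : ℚ) ^ v / (2 ^ v * (v ! : ℚ))) * (1 / (2 ^ (h - v) * ((h - v)! : ℚ))) := by
      have hmul := coeff_mul_degree_add_degree (A v) (B k (h - v))
      rw [hlcA, hlcB, hAdeg', hBdeg'] at hmul
      have hkk : 2 * v + 2 * (h - v) = k := by omega
      rw [hkk] at hmul
      exact hmul
    rw [hco, Nat.cast_choose ℚ hvh]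
    have h2 : (2 : ℚ) ^ h = 2 ^ v * 2 ^ (h - v) := by
      rw [← pow_add]
      congr 1
      omega
    have hne1 : ((v ! : ℚ)) ≠ 0 := by positivity
    have hne2 : (((h - v)! : ℚ)) ≠ 0 := by positivity
    have hne3 : ((h ! : ℚ)) ≠ 0 := by positivity
    rw [h2]
    field_simp
  · exact coeff_eq_zero_of_natDegree_lt
      (lt_of_le_of_lt (Pp_natDegree_le k h v hv) (by omega))

/-- The monic "falling factorial" polynomial `∏_{i<k}(X - i)`. -/
noncomputable def Qq (k : ℕ) : ℚ[X] := ∏ i ∈ range k, (X - Polynomial.C (i : ℚ))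

end Stmt18

open Stmt18 Polynomial Finset Nat in
/-- Let `k ≥ 2` be an even integer and let `v` be an integer with
`0 ≤ v ≤ k`.  With `c_{N,k,v} = (coefficient of f^{k−v} in α_{N,k}(f)) / (N)_k`, one
has `lim_{N→∞} N^{k/2} c_{N,k,v} = (−1)^v C(k/2, v) · k!/(2^{k/2} (k/2)!)` when
`0 ≤ v ≤ k/2`, and `lim_{N→∞} N^{k/2} c_{N,k,v} = 0` when `k/2 < v ≤ k`.
(Here `k!/(2^{k/2}(k/2)!) = E Z^k`, the `k`-th moment of a standard normal.) -/
theorem c_limit_even (k : ℕ) (hk2 : 2 ≤ k) (hk : Even k) (v : ℕ) (hv : v ≤ k) :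
    Tendsto (fun N : ℕ => (N : ℝ) ^ (k / 2) * ((c N k v : ℚ) : ℝ)) atTop
      (nhds (if v ≤ k / 2 then
          (-1 : ℝ) ^ v * (Nat.choose (k / 2) v : ℝ) *
            ((Nat.factorial k : ℝ) / (2 ^ (k / 2) * (Nat.factorial (k / 2) : ℝ)))
        else 0)) := by
  have hdvd : k = 2 * (k / 2) := by
    obtain ⟨m, hm⟩ := hk
    omega
  set h : ℕ := k / 2 with hh
  set Lq : ℚ := if v ≤ h then (-1 : ℚ) ^ v * (h.choose v : ℚ)
      * ((k ! : ℚ) / (2 ^ h * (h ! : ℚ))) else 0 with hLq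
  have hPk : (Pp k h v).coeff k = Lq := Pp_coeff_k k h v hdvd hv
  have htarget : (if v ≤ h then
        (-1 : ℝ) ^ v * (Nat.choose h v : ℝ) *
          ((Nat.factorial k : ℝ) / (2 ^ h * (Nat.factorial h : ℝ)))
      else 0) = ((Lq : ℚ) : ℝ) := by
    rw [hLq]
    split_ifs
    · push_cast
      ring
    · simp
  rw [htarget]
  set rcr : ℚ →+* ℝ := Rat.castHom ℝ with hrc
  set Pr : ℝ[X] := (Pp k h v).map rcr with hPr
  set Qr : ℝ[X] := (Qq k).map rcr with hQr
  set D : ℝ[X] := Pr - Polynomial.C ((Lq : ℝ)) * Qr with hD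
  have hQmonic : (Qq k).Monic := prodlin_monic _
  have hQdeg : (Qq k).natDegree = k := by
    rw [Qq, prodlin_natDegree, card_range]
  have hQrmonic : Qr.Monic := hQmonic.map rcr
  have hQrne : Qr ≠ 0 := hQrmonic.ne_zero
  have hQrdeg : Qr.natDegree = k := by
    rw [hQr, hQmonic.natDegree_map, hQdeg]
  have hDdeg : D.degree < Qr.degree := by
    rw [degree_eq_natDegree hQrne, hQrdeg, degree_lt_iff_coeff_zero]
    intro m hm
    have hm' : k ≤ m := by exact_mod_cast hm
    rw [hD, coeff_sub, coeff_C_mul, hPr, hQr, coeff_map, coeff_map]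
    rcases eq_or_lt_of_le hm' with hmk | hmk
    · rw [← hmk, hPk]
      have : (Qq k).coeff k = 1 := by
        have := hQmonic.coeff_natDegree
        rwa [hQdeg] at this
      rw [this]
      simp
    · rw [Pp_coeff_gt k h v m hdvd hv hmk,
        coeff_eq_zero_of_natDegree_lt (by omega : (Qq k).natDegree < m)]
      simp
  have h0 : Tendsto (fun x : ℝ => D.eval x / Qr.eval x) atTop (nhds 0) :=
    Polynomial.div_tendsto_zero_of_degree_lt D Qr hDdeg
  have h0' : Tendsto (fun N : ℕ => D.eval ((N : ℕ) : ℝ) / Qr.eval ((N : ℕ) : ℝ) + ((Lq : ℚ) : ℝ))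
      atTop (nhds (((Lq : ℚ) : ℝ))) := by
    have := (h0.comp (tendsto_natCast_atTop_atTop (R := ℝ))).add_const ((Lq : ℚ) : ℝ)
    simpa using this
  refine h0'.congr' ?_
  filter_upwards [eventually_ge_atTop k] with N hN
  have hQev : (Qq k).eval ((N : ℕ) : ℚ) = (N.descFactorial k : ℚ) := by
    rw [Nat.descFactorial_eq_prod_range, Nat.cast_prod, Qq, eval_prod]
    refine Finset.prod_congr rfl fun i hi => ?_
    simp only [Finset.mem_range] at hi
    rw [eval_sub, eval_X, eval_C, Nat.cast_sub (by omega)]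
  have hQpos : (0 : ℚ) < (Qq k).eval ((N : ℕ) : ℚ) := by
    rw [Qq, eval_prod]
    refine Finset.prod_pos fun i hi => ?_
    simp only [Finset.mem_range] at hi
    rw [eval_sub, eval_X, eval_C]
    have : (i : ℚ) < (N : ℚ) := by exact_mod_cast lt_of_lt_of_le hi hN
    linarith
  have hPrev : Pr.eval ((N : ℕ) : ℝ) = (((Pp k h v).eval ((N : ℕ) : ℚ) : ℚ) : ℝ) := by
    rw [hPr, Polynomial.eval_map, show ((N : ℕ) : ℝ) = rcr ((N : ℕ) : ℚ) by simp [hrc]]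
    exact Polynomial.eval₂_at_apply rcr _
  have hQrev : Qr.eval ((N : ℕ) : ℝ) = (((Qq k).eval ((N : ℕ) : ℚ) : ℚ) : ℝ) := by
    rw [hQr, Polynomial.eval_map, show ((N : ℕ) : ℝ) = rcr ((N : ℕ) : ℚ) by simp [hrc]]
    exact Polynomial.eval₂_at_apply rcr _
  have hQrne' : Qr.eval ((N : ℕ) : ℝ) ≠ 0 := by
    rw [hQrev]
    exact_mod_cast hQpos.ne'
  have hkey : ((N : ℕ) : ℚ) ^ h * c N k v
      = (Pp k h v).eval ((N : ℕ) : ℚ) / (Qq k).eval ((N : ℕ) : ℚ) := by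
    rw [c, ← hQev, eval_Pp N k h v hv, mul_div_assoc]
  have hrhs : ((N : ℕ) : ℝ) ^ h * ((c N k v : ℚ) : ℝ)
      = Pr.eval ((N : ℕ) : ℝ) / Qr.eval ((N : ℕ) : ℝ) := by
    rw [hPrev, hQrev, ← Rat.cast_div, ← hkey]
    push_cast
    ring
  rw [hrhs, hD]
  simp only [eval_sub, eval_mul, eval_C]
  field_simp
  ring
end
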